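/- arXiv:1003.3471 — 4 statements merged into one kernel-verified Lean document; each statement's English description precedes it below -/
import Mathlib

section
/- Let Q and Q' be monomial primary ideals of S = K[x_1,…,x_n] with √Q = (x_1,…,x_t) and √Q' = (x_{r+1},…,x_n), where 1 < r ≤ t < n and n ≥ 4. Then sdepth(Q ∩ Q') ≤ (n + t − r + 2)/2, i.e. 2·sdepth(Q ∩ Q') ≤ n + t − r + 2. -/
open MvPolynomial

variable {K : Type*} [Field K]

/-- The Stanley space `u·K[Z]`: the `K`-linear span of all `u * v` where `v` is a
monomial in the variables of `Z`. -/
noncomputable def stanleySpace {n : ℕ} (u : MvPolynomial (Fin n) K) (Z : Finset (Fin n)) :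
    Submodule K (MvPolynomial (Fin n) K) :=
  Submodule.span K { w | ∃ d : Fin n →₀ ℕ, ↑d.support ⊆ (Z : Set (Fin n)) ∧
    w = u * MvPolynomial.monomial d 1 }

/-- `u` is a monomial. -/
def IsMonomial {n : ℕ} (u : MvPolynomial (Fin n) K) : Prop :=
  ∃ d : Fin n →₀ ℕ, u = MvPolynomial.monomial d 1

/-- A monomial ideal: an ideal generated by monomials. -/
def IsMonomialIdeal {n : ℕ} (I : Ideal (MvPolynomial (Fin n) K)) : Prop :=
  ∃ G : Set (MvPolynomial (Fin n) K), (∀ u ∈ G, IsMonomial u) ∧ I = Ideal.span G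

/-- `(u i, Z i)` is a Stanley decomposition of the ideal `I`:
`I = ⊕ᵢ uᵢ K[Zᵢ]` as `K`-vector spaces, with each `uᵢ` a monomial. -/
def IsStanleyDecomp {n : ℕ} (I : Ideal (MvPolynomial (Fin n) K)) {s : ℕ}
    (u : Fin s → MvPolynomial (Fin n) K) (Z : Fin s → Finset (Fin n)) : Prop :=
  (∀ i, IsMonomial (u i)) ∧
  iSupIndep (fun i => stanleySpace (u i) (Z i)) ∧
  (⨆ i, stanleySpace (u i) (Z i)) = Submodule.restrictScalars K I

/-- The Stanley depth of a monomial ideal: the largest `k` such that there is a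
Stanley decomposition all of whose Stanley spaces have dimension at least `k`. -/
noncomputable def sdepth {n : ℕ} (I : Ideal (MvPolynomial (Fin n) K)) : ℕ :=
  sSup { k | ∃ (s : ℕ) (u : Fin s → MvPolynomial (Fin n) K) (Z : Fin s → Finset (Fin n)),
    IsStanleyDecomp I u Z ∧ ∀ i, k ≤ (Z i).card }


namespace SdepthAux

variable {n : ℕ}

/-- Polynomials whose monomial exponents all lie in `T`, as a submodule. -/
def expSupported (K : Type*) [Field K] (n : ℕ) (T : Set (Fin n →₀ ℕ)) :
    Submodule K (MvPolynomial (Fin n) K) where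
  carrier := {P | ∀ m ∈ P.support, m ∈ T}
  add_mem' := by
    intro a b ha hb m hm
    rcases Finset.mem_union.1 (MvPolynomial.support_add hm) with h | h
    · exact ha _ h
    · exact hb _ h
  zero_mem' := by intro m hm; simp at hm
  smul_mem' := by intro cst a ha m hm; exact ha _ (MvPolynomial.support_smul hm)

lemma expSupported_mono {T T' : Set (Fin n →₀ ℕ)} (h : T ⊆ T') :
    expSupported K n T ≤ expSupported K n T' := fun _P hP m hm => h (hP m hm)

lemma stanleySpace_le_expSupported (e : Fin n →₀ ℕ) (Z : Finset (Fin n)) :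
    stanleySpace (MvPolynomial.monomial e (1 : K)) Z ≤
      expSupported K n {g | ∃ d : Fin n →₀ ℕ, ↑d.support ⊆ (Z : Set (Fin n)) ∧ g = e + d} := by
  classical
  apply Submodule.span_le.2
  rintro w ⟨d, hd, rfl⟩
  intro m hm
  rw [MvPolynomial.monomial_mul, one_mul, MvPolynomial.support_monomial] at hm
  rw [if_neg (one_ne_zero)] at hm
  exact ⟨d, hd, (Finset.mem_singleton.1 hm)⟩

lemma monomial_mem_stanleySpace {e d : Fin n →₀ ℕ} {Z : Finset (Fin n)}
    (hd : ↑d.support ⊆ (Z : Set (Fin n))) :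
    (MvPolynomial.monomial (e + d) (1 : K)) ∈ stanleySpace (MvPolynomial.monomial e 1) Z :=
  Submodule.subset_span ⟨d, hd, by rw [MvPolynomial.monomial_mul, one_mul]⟩

lemma self_mem_support {g : Fin n →₀ ℕ} :
    g ∈ (MvPolynomial.monomial g (1 : K)).support := by
  classical
  rw [MvPolynomial.support_monomial, if_neg one_ne_zero]
  exact Finset.mem_singleton_self g

lemma exp_of_monomial_mem {e g : Fin n →₀ ℕ} {Z : Finset (Fin n)}
    (h : (MvPolynomial.monomial g (1 : K)) ∈ stanleySpace (MvPolynomial.monomial e 1) Z) :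
    ∃ d : Fin n →₀ ℕ, ↑d.support ⊆ (Z : Set (Fin n)) ∧ g = e + d :=
  stanleySpace_le_expSupported e Z h g self_mem_support

lemma exists_index_of_monomial_mem_iSup {s : ℕ} (e : Fin s → (Fin n →₀ ℕ))
    (Z : Fin s → Finset (Fin n)) {g : Fin n →₀ ℕ}
    (h : (MvPolynomial.monomial g (1 : K)) ∈
      ⨆ i, stanleySpace (MvPolynomial.monomial (e i) 1) (Z i)) :
    ∃ (i : Fin s) (d : Fin n →₀ ℕ), ↑d.support ⊆ (Z i : Set (Fin n)) ∧ g = e i + d := by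
  have hle : (⨆ i, stanleySpace (MvPolynomial.monomial (e i) (1:K)) (Z i)) ≤
      expSupported K n (⋃ i, {g | ∃ d : Fin n →₀ ℕ, ↑d.support ⊆ (Z i : Set (Fin n)) ∧ g = e i + d}) := by
    apply iSup_le
    intro i
    exact (stanleySpace_le_expSupported (e i) (Z i)).trans
      (expSupported_mono (Set.subset_iUnion (fun i => {g | ∃ d : Fin n →₀ ℕ, ↑d.support ⊆ (Z i : Set (Fin n)) ∧ g = e i + d}) i))
  obtain ⟨i, d, hd, hg⟩ := Set.mem_iUnion.1 (hle h g self_mem_support)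
  exact ⟨i, d, hd, hg⟩

end SdepthAux

namespace SdepthAux

variable {n : ℕ}

/-- the exponent vector with value `c` on `S` and `0` elsewhere -/
noncomputable def chi (c : ℕ) (S : Finset (Fin n)) : Fin n →₀ ℕ :=
  Finsupp.onFinset S (fun j => if j ∈ S then c else 0)
    (by intro j h; by_contra hj; simp [hj] at h)

lemma chi_apply {c : ℕ} {S : Finset (Fin n)} {j : Fin n} :
    chi c S j = if j ∈ S then c else 0 := rfl

lemma chi_apply_mem {c : ℕ} {S : Finset (Fin n)} {j : Fin n} (h : j ∈ S) :
    chi c S j = c := by rw [chi_apply, if_pos h]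

lemma chi_apply_not_mem {c : ℕ} {S : Finset (Fin n)} {j : Fin n} (h : j ∉ S) :
    chi c S j = 0 := by rw [chi_apply, if_neg h]

lemma card_filter_val_lt (m : ℕ) (h : m ≤ n) :
    (Finset.univ.filter (fun i : Fin n => (i : ℕ) < m)).card = m := by
  have heq : Finset.univ.filter (fun i : Fin n => (i : ℕ) < m)
      = Finset.map (Fin.castLEEmb h) Finset.univ := by
    ext i
    simp only [Finset.mem_filter, Finset.mem_univ, true_and, Finset.mem_map]
    constructor
    · intro hi
      refine ⟨⟨(i : ℕ), hi⟩, ?_⟩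
      ext; simp
    · rintro ⟨a, rfl⟩
      simp
  rw [heq, Finset.card_map, Finset.card_univ, Fintype.card_fin]

lemma card_filter_val_ge (m : ℕ) (h : m ≤ n) :
    (Finset.univ.filter (fun i : Fin n => m ≤ (i : ℕ))).card = n - m := by
  classical
  have h1 := Finset.card_filter_add_card_filter_not
    (s := (Finset.univ : Finset (Fin n))) (p := fun i : Fin n => (i : ℕ) < m)
  have h2 : Finset.univ.filter (fun i : Fin n => ¬ (i : ℕ) < m)
      = Finset.univ.filter (fun i : Fin n => m ≤ (i : ℕ)) := by
    apply Finset.filter_congr; intro i _; simp [not_lt]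
  rw [card_filter_val_lt m h, h2, Finset.card_univ, Fintype.card_fin] at h1
  omega

lemma card_filter_val_band (r t : ℕ) (hrt : r ≤ t) (h : t ≤ n) :
    (Finset.univ.filter (fun i : Fin n => r ≤ (i : ℕ) ∧ (i : ℕ) < t)).card = t - r := by
  classical
  have hsub : Finset.univ.filter (fun i : Fin n => (i : ℕ) < r)
      ⊆ Finset.univ.filter (fun i : Fin n => (i : ℕ) < t) := by
    intro i hi
    simp only [Finset.mem_filter, Finset.mem_univ, true_and] at hi ⊢
    omega
  have heq : Finset.univ.filter (fun i : Fin n => r ≤ (i : ℕ) ∧ (i : ℕ) < t)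
      = Finset.univ.filter (fun i : Fin n => (i : ℕ) < t)
        \ Finset.univ.filter (fun i : Fin n => (i : ℕ) < r) := by
    ext i
    simp only [Finset.mem_filter, Finset.mem_univ, true_and, Finset.mem_sdiff]
    omega
  rw [heq, Finset.card_sdiff_of_subset hsub, card_filter_val_lt t h,
    card_filter_val_lt r (le_trans hrt h)]

end SdepthAux

theorem sdepth_inter_le_overlap {n t r : ℕ} (hr : 1 < r) (hrt : r ≤ t) (htn : t < n)
    (hn : 4 ≤ n)
    (Q Q' : Ideal (MvPolynomial (Fin n) K))
    (hQm : IsMonomialIdeal Q) (hQ'm : IsMonomialIdeal Q')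
    (hQp : Q.IsPrimary) (hQ'p : Q'.IsPrimary)
    (hQr : Q.radical =
      Ideal.span ((fun i => (X i : MvPolynomial (Fin n) K)) '' {i | (i : ℕ) < t}))
    (hQ'r : Q'.radical =
      Ideal.span ((fun i => (X i : MvPolynomial (Fin n) K)) '' {i | r ≤ (i : ℕ)})) :
    2 * sdepth (Q ⊓ Q') ≤ n + t - r + 2 := by
  classical
  open SdepthAux in
  have key : ∀ k, (∃ (s : ℕ) (u : Fin s → MvPolynomial (Fin n) K) (Z : Fin s → Finset (Fin n)),
      IsStanleyDecomp (Q ⊓ Q') u Z ∧ ∀ i, k ≤ (Z i).card) → 2 * k ≤ n + t - r + 2 := by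
    rintro k ⟨s, u, Z, ⟨hmono, hindep, hsup⟩, hcard⟩
    by_cases hk3 : k ≤ t - r + 2
    · omega
    push_neg at hk3
    choose e he using hmono
    -- the uniform exponent c
    have h1 : ∀ i : Fin n, ∃ m, ((i : ℕ) < t → X i ^ m ∈ Q) := by
      intro i
      by_cases hi : (i : ℕ) < t
      · have hX : (X i : MvPolynomial (Fin n) K) ∈ Q.radical := by
          rw [hQr]; exact Ideal.subset_span ⟨i, hi, rfl⟩
        obtain ⟨m, hm⟩ := Ideal.mem_radical_iff.1 hX
        exact ⟨m, fun _ => hm⟩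
      · exact ⟨0, fun h => absurd h hi⟩
    have h2 : ∀ i : Fin n, ∃ m, (r ≤ (i : ℕ) → X i ^ m ∈ Q') := by
      intro i
      by_cases hi : r ≤ (i : ℕ)
      · have hX : (X i : MvPolynomial (Fin n) K) ∈ Q'.radical := by
          rw [hQ'r]; exact Ideal.subset_span ⟨i, hi, rfl⟩
        obtain ⟨m, hm⟩ := Ideal.mem_radical_iff.1 hX
        exact ⟨m, fun _ => hm⟩
      · exact ⟨0, fun h => absurd h hi⟩
    choose f1 hf1 using h1
    choose f2 hf2 using h2
    set c : ℕ := Finset.univ.sup f1 + Finset.univ.sup f2 + 1 with hcdef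
    have hcQ : ∀ i : Fin n, (i : ℕ) < t → X i ^ c ∈ Q := by
      intro i hi
      have hfi : f1 i ≤ c := by
        have := Finset.le_sup (f := f1) (Finset.mem_univ i); omega
      have hpow : (X i : MvPolynomial (Fin n) K) ^ c = X i ^ (c - f1 i) * X i ^ f1 i := by
        rw [← pow_add]; congr 1; omega
      rw [hpow]; exact Ideal.mul_mem_left _ _ (hf1 i hi)
    have hcQ' : ∀ i : Fin n, r ≤ (i : ℕ) → X i ^ c ∈ Q' := by
      intro i hi
      have hfi : f2 i ≤ c := by
        have := Finset.le_sup (f := f2) (Finset.mem_univ i); omega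
      have hpow : (X i : MvPolynomial (Fin n) K) ^ c = X i ^ (c - f2 i) * X i ^ f2 i := by
        rw [← pow_add]; congr 1; omega
      rw [hpow]; exact Ideal.mul_mem_left _ _ (hf2 i hi)
    -- membership of the cube monomials
    have hwmem : ∀ S : Finset (Fin n), (∃ a ∈ S, (a : ℕ) < t) → (∃ b ∈ S, r ≤ (b : ℕ)) →
        (monomial (chi c S) (1 : K)) ∈ Q ⊓ Q' := by
      rintro S ⟨a, haS, hat⟩ ⟨b, hbS, hbr⟩
      have keymem : ∀ (J : Ideal (MvPolynomial (Fin n) K)) (i : Fin n), i ∈ S →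
          (X i : MvPolynomial (Fin n) K) ^ c ∈ J → monomial (chi c S) (1 : K) ∈ J := by
        intro J i hiS hX
        have hle : Finsupp.single i c ≤ chi c S := by
          rw [Finsupp.le_def]; intro j
          rcases eq_or_ne i j with rfl | hij
          · rw [Finsupp.single_eq_same, chi_apply_mem hiS]
          · rw [Finsupp.single_eq_of_ne' hij]; exact Nat.zero_le _
        have heq2 : monomial (chi c S) (1 : K)
            = X i ^ c * monomial (chi c S - Finsupp.single i c) 1 := by
          rw [MvPolynomial.X_pow_eq_monomial, MvPolynomial.monomial_mul, one_mul,
            add_tsub_cancel_of_le hle]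
        rw [heq2]; exact Ideal.mul_mem_right _ _ hX
      exact Submodule.mem_inf.2 ⟨keymem Q a haS (hcQ a hat), keymem Q' b hbS (hcQ' b hbr)⟩
    -- non-membership forces support
    have hQsupp : ∀ S : Finset (Fin n), (monomial (chi c S) (1 : K)) ∈ Q →
        ∃ j ∈ S, (j : ℕ) < t := by
      intro S hS
      have hrad : (monomial (chi c S) (1 : K)) ∈ Q.radical := Ideal.le_radical hS
      rw [hQr] at hrad
      obtain ⟨i, hit, hine⟩ := MvPolynomial.mem_ideal_span_X_image.1 hrad (chi c S)
        SdepthAux.self_mem_support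
      refine ⟨i, ?_, hit⟩
      by_contra hiS
      rw [chi_apply_not_mem hiS] at hine
      exact hine rfl
    have hQ'supp : ∀ S : Finset (Fin n), (monomial (chi c S) (1 : K)) ∈ Q' →
        ∃ j ∈ S, r ≤ (j : ℕ) := by
      intro S hS
      have hrad : (monomial (chi c S) (1 : K)) ∈ Q'.radical := Ideal.le_radical hS
      rw [hQ'r] at hrad
      obtain ⟨i, hit, hine⟩ := MvPolynomial.mem_ideal_span_X_image.1 hrad (chi c S)
        SdepthAux.self_mem_support
      refine ⟨i, ?_, hit⟩
      by_contra hiS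
      rw [chi_apply_not_mem hiS] at hine
      exact hine rfl
    -- class existence and uniqueness
    have hclass : ∀ S : Finset (Fin n), monomial (chi c S) (1 : K) ∈ Q ⊓ Q' →
        ∃ (p : Fin s) (d : Fin n →₀ ℕ), ↑d.support ⊆ (Z p : Set (Fin n)) ∧ chi c S = e p + d := by
      intro S hS
      have hm1 : monomial (chi c S) (1 : K) ∈ ⨆ i, stanleySpace (u i) (Z i) := by
        rw [hsup]; exact (Submodule.restrictScalars_mem _ _ _).2 hS
      have hm2 : (fun i => stanleySpace (u i) (Z i))
          = fun i => stanleySpace (monomial (e i) (1 : K)) (Z i) := by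
        funext i; rw [he i]
      rw [hm2] at hm1
      exact SdepthAux.exists_index_of_monomial_mem_iSup e Z hm1
    have huniq : ∀ (g : Fin n →₀ ℕ) (p q : Fin s),
        monomial g (1 : K) ∈ stanleySpace (u p) (Z p) →
        monomial g (1 : K) ∈ stanleySpace (u q) (Z q) → p = q := by
      intro g p q hp hq
      by_contra hpq
      have h2 : stanleySpace (u q) (Z q) ≤ ⨆ (j) (_ : j ≠ p), stanleySpace (u j) (Z j) :=
        le_iSup₂ (f := fun (j : Fin s) (_ : j ≠ p) => stanleySpace (u j) (Z j)) q
          (fun h => hpq h.symm)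
      have h0 : monomial g (1 : K) = 0 :=
        (Submodule.disjoint_def.1 ((iSupIndep_def.1 hindep) p)) _ hp (h2 hq)
      rw [MvPolynomial.monomial_eq_zero] at h0
      exact one_ne_zero h0
    -- support of base exponent of the class of a pair
    have hsub : ∀ (a b : Fin n) (p : Fin s) (d : Fin n →₀ ℕ),
        chi c {a, b} = e p + d → (e p).support ⊆ ({a, b} : Finset (Fin n)) := by
      intro a b p d heq j hj
      by_contra hjab
      have h1 : e p j ≤ chi c ({a, b} : Finset (Fin n)) j := by
        rw [heq, Finsupp.add_apply]; exact Nat.le_add_right _ _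
      rw [chi_apply_not_mem hjab] at h1
      exact (Finsupp.mem_support_iff.1 hj) (Nat.le_zero.1 h1)
    have hpoint : ∀ (a b : Fin n) (p : Fin s) (d : Fin n →₀ ℕ),
        chi c {a, b} = e p + d → ∀ j ∈ ({a, b} : Finset (Fin n)), c = e p j + d j := by
      intro a b p d heq j hj
      calc c = chi c ({a, b} : Finset (Fin n)) j := (chi_apply_mem hj).symm
        _ = e p j + d j := by rw [heq, Finsupp.add_apply]
    have hspread : ∀ (a b : Fin n) (p : Fin s) (d : Fin n →₀ ℕ), (a : ℕ) < r → t ≤ (b : ℕ) →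
        ↑d.support ⊆ (Z p : Set (Fin n)) → chi c {a, b} = e p + d →
        ∀ U : Finset (Fin n), a ∈ U → b ∈ U → (∀ j ∈ U, j = a ∨ j = b ∨ j ∈ Z p) →
        monomial (chi c U) (1 : K) ∈ stanleySpace (u p) (Z p) := by
      intro a b p d ha hb hd heq U haU hbU hU
      have habU : ({a, b} : Finset (Fin n)) ⊆ U := by
        intro j hj
        rcases Finset.mem_insert.1 hj with rfl | hj
        · exact haU
        · rw [Finset.mem_singleton.1 hj]; exact hbU
      have hle : e p ≤ chi c U := by
        rw [Finsupp.le_def]; intro j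
        by_cases hjs : j ∈ (e p).support
        · have hjab := hsub a b p d heq hjs
          have h1 : e p j ≤ chi c ({a, b} : Finset (Fin n)) j := by
            rw [heq, Finsupp.add_apply]; exact Nat.le_add_right _ _
          rw [chi_apply_mem hjab] at h1
          rw [chi_apply_mem (habU hjab)]
          exact h1
        · rw [Finsupp.notMem_support_iff.1 hjs]; exact Nat.zero_le _
      have heqU : chi c U = e p + (chi c U - e p) := (add_tsub_cancel_of_le hle).symm
      have hdU : ↑((chi c U - e p).support) ⊆ (Z p : Set (Fin n)) := by
        intro j hj
        have hval : chi c U j - e p j ≠ 0 := by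
          have := Finsupp.mem_support_iff.1 (Finset.mem_coe.1 hj)
          rwa [Finsupp.tsub_apply] at this
        have hjU : j ∈ U := by
          by_contra hjU
          rw [chi_apply_not_mem hjU] at hval
          omega
        rcases hU j hjU with h | h | h
        · have hjab : j ∈ ({a, b} : Finset (Fin n)) := by
            rw [h]; exact Finset.mem_insert_self _ _
          have hpj := hpoint a b p d heq j hjab
          rw [chi_apply_mem hjU] at hval
          have hdj : d j ≠ 0 := by omega
          exact hd (Finset.mem_coe.2 (Finsupp.mem_support_iff.2 hdj))
        · have hjab : j ∈ ({a, b} : Finset (Fin n)) := by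
            rw [h]; exact Finset.mem_insert_of_mem (Finset.mem_singleton_self _)
          have hpj := hpoint a b p d heq j hjab
          rw [chi_apply_mem hjU] at hval
          have hdj : d j ≠ 0 := by omega
          exact hd (Finset.mem_coe.2 (Finsupp.mem_support_iff.2 hdj))
        · exact Finset.mem_coe.2 h
      rw [he p, heqU]
      exact SdepthAux.monomial_mem_stanleySpace hdU
    have hbase : ∀ (a b : Fin n) (p : Fin s) (d : Fin n →₀ ℕ), (a : ℕ) < r → t ≤ (b : ℕ) →
        ↑d.support ⊆ (Z p : Set (Fin n)) → chi c {a, b} = e p + d →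
        (e p).support = ({a, b} : Finset (Fin n)) := by
      intro a b p d ha hb hd heq
      have hsub' := hsub a b p d heq
      set B := (e p).support with hBdef
      have hle : e p ≤ chi c B := by
        rw [Finsupp.le_def]; intro j
        by_cases hjs : j ∈ B
        · have hjab := hsub' hjs
          have h1 : e p j ≤ chi c ({a, b} : Finset (Fin n)) j := by
            rw [heq, Finsupp.add_apply]; exact Nat.le_add_right _ _
          rw [chi_apply_mem hjab] at h1
          rw [chi_apply_mem hjs]
          exact h1
        · rw [Finsupp.notMem_support_iff.1 hjs]; exact Nat.zero_le _
      have heqB : chi c B = e p + (chi c B - e p) := (add_tsub_cancel_of_le hle).symm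
      have hdB : ↑((chi c B - e p).support) ⊆ (Z p : Set (Fin n)) := by
        intro j hj
        have hval : chi c B j - e p j ≠ 0 := by
          have := Finsupp.mem_support_iff.1 (Finset.mem_coe.1 hj)
          rwa [Finsupp.tsub_apply] at this
        have hjB : j ∈ B := by
          by_contra hjB
          rw [chi_apply_not_mem hjB] at hval
          omega
        have hjab := hsub' hjB
        have hpj := hpoint a b p d heq j hjab
        rw [chi_apply_mem hjB] at hval
        have : d j ≠ 0 := by omega
        exact hd (Finset.mem_coe.2 (Finsupp.mem_support_iff.2 this))
      have hwB : monomial (chi c B) (1 : K) ∈ stanleySpace (u p) (Z p) := by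
        rw [he p, heqB]
        exact SdepthAux.monomial_mem_stanleySpace hdB
      have hwBI : monomial (chi c B) (1 : K) ∈ Q ⊓ Q' := by
        have hle2 : stanleySpace (u p) (Z p) ≤ Submodule.restrictScalars K (Q ⊓ Q') := by
          rw [← hsup]; exact le_iSup (fun i => stanleySpace (u i) (Z i)) p
        exact (Submodule.restrictScalars_mem _ _ _).1 (hle2 hwB)
      obtain ⟨j1, hj1B, hj1t⟩ := hQsupp B hwBI.1
      obtain ⟨j2, hj2B, hj2r⟩ := hQ'supp B hwBI.2
      have hj1a : j1 = a := by
        rcases Finset.mem_insert.1 (hsub' hj1B) with h | h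
        · exact h
        · rw [Finset.mem_singleton.1 h] at hj1t; omega
      have hj2b : j2 = b := by
        rcases Finset.mem_insert.1 (hsub' hj2B) with h | h
        · rw [h] at hj2r; omega
        · exact Finset.mem_singleton.1 h
      apply Finset.Subset.antisymm hsub'
      intro j hj
      rcases Finset.mem_insert.1 hj with rfl | h
      · rw [← hj1a]; exact hj1B
      · rw [Finset.mem_singleton.1 h, ← hj2b]; exact hj2B
    -- s is positive
    have hs0 : 0 < s := by
      rcases Nat.eq_zero_or_pos s with h0 | h0
      · exfalso
        have h0n : 0 < n := by omega
        have hn1 : n - 1 < n := by omega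
        have hw : monomial (chi c ({⟨0, h0n⟩, ⟨n - 1, hn1⟩} : Finset (Fin n))) (1 : K)
            ∈ Q ⊓ Q' := by
          apply hwmem
          · refine ⟨⟨0, h0n⟩, Finset.mem_insert_self _ _, ?_⟩
            show (0 : ℕ) < t; omega
          · refine ⟨⟨n - 1, hn1⟩, Finset.mem_insert_of_mem (Finset.mem_singleton_self _), ?_⟩
            show r ≤ n - 1; omega
        obtain ⟨p, -, -⟩ := hclass _ hw
        exact Fin.elim0 (Fin.cast h0 p)
      · exact h0
    -- choose classes of the pairs
    have hpairEx : ∀ v : Fin n × Fin n, ∃ (p : Fin s) (d : Fin n →₀ ℕ),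
        (((v.1 : ℕ) < r ∧ t ≤ (v.2 : ℕ)) →
          (↑d.support ⊆ (Z p : Set (Fin n)) ∧ chi c {v.1, v.2} = e p + d)) := by
      intro v
      by_cases hv : (v.1 : ℕ) < r ∧ t ≤ (v.2 : ℕ)
      · obtain ⟨p, d, hd1, hd2⟩ := hclass {v.1, v.2} (hwmem _
          ⟨v.1, Finset.mem_insert_self _ _, by omega⟩
          ⟨v.2, Finset.mem_insert_of_mem (Finset.mem_singleton_self _), by omega⟩)
        exact ⟨p, d, fun _ => ⟨hd1, hd2⟩⟩
      · exact ⟨⟨0, hs0⟩, 0, fun h => absurd h hv⟩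
    choose π δ hπδ using hpairEx
    -- the combinatorial sets
    set Xf := Finset.univ.filter (fun i : Fin n => (i : ℕ) < r) with hXfdef
    set Yf := Finset.univ.filter (fun i : Fin n => t ≤ (i : ℕ)) with hYfdef
    set Of := Finset.univ.filter (fun i : Fin n => r ≤ (i : ℕ) ∧ (i : ℕ) < t) with hOfdef
    have hXfcard : Xf.card = r := card_filter_val_lt r (by omega)
    have hYfcard : Yf.card = n - t := card_filter_val_ge t (by omega)
    have hOfcard : Of.card = t - r := card_filter_val_band r t hrt (by omega)
    have hXfmem : ∀ j : Fin n, j ∈ Xf ↔ (j : ℕ) < r := by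
      intro j; rw [hXfdef]; simp
    have hYfmem : ∀ j : Fin n, j ∈ Yf ↔ t ≤ (j : ℕ) := by
      intro j; rw [hYfdef]; simp
    have hOfmem : ∀ j : Fin n, j ∈ Of ↔ (r ≤ (j : ℕ) ∧ (j : ℕ) < t) := by
      intro j; rw [hOfdef]; simp
    set P2 := Xf ×ˢ Yf with hP2def
    have hP2mem : ∀ v : Fin n × Fin n, v ∈ P2 ↔ ((v.1 : ℕ) < r ∧ t ≤ (v.2 : ℕ)) := by
      intro v
      rw [hP2def, Finset.mem_product]
      rw [hXfmem, hYfmem]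
    set W : Fin n × Fin n → Finset (Fin n) :=
      fun v => ({v.1, v.2} ∪ Z (π v)) \ Of with hWdef
    set SA : Fin n × Fin n → Finset (Fin n) := fun v => (W v ∩ Xf).erase v.1 with hSAdef
    set SB : Fin n × Fin n → Finset (Fin n) := fun v => (W v ∩ Yf).erase v.2 with hSBdef
    -- lower bound for each pair
    have hlow : ∀ v ∈ P2, k - (t - r) ≤ (SA v).card + (SB v).card + 2 := by
      intro v hv
      have hWc : k - (t - r) ≤ (W v).card := by
        have h1 : (Z (π v)).card ≤ ({v.1, v.2} ∪ Z (π v)).card :=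
          Finset.card_le_card Finset.subset_union_right
        have h2 := Finset.le_card_sdiff Of ({v.1, v.2} ∪ Z (π v))
        have h3 := hcard (π v)
        rw [hOfcard] at h2
        exact le_trans (by omega) h2
      have hcover : W v ⊆ insert v.1 (insert v.2 (SA v ∪ SB v)) := by
        intro j hj
        rcases eq_or_ne j v.1 with rfl | hja
        · exact Finset.mem_insert_self _ _
        apply Finset.mem_insert_of_mem
        rcases eq_or_ne j v.2 with rfl | hjb
        · exact Finset.mem_insert_self _ _
        apply Finset.mem_insert_of_mem
        have hjO : j ∉ Of := (Finset.mem_sdiff.1 hj).2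
        rw [hOfmem j] at hjO
        have hor : (j : ℕ) < r ∨ t ≤ (j : ℕ) := by omega
        rcases hor with h | h
        · exact Finset.mem_union_left _
            (Finset.mem_erase.2 ⟨hja, Finset.mem_inter.2 ⟨hj, (hXfmem j).2 h⟩⟩)
        · exact Finset.mem_union_right _
            (Finset.mem_erase.2 ⟨hjb, Finset.mem_inter.2 ⟨hj, (hYfmem j).2 h⟩⟩)
      have h4 := Finset.card_le_card hcover
      have h5 := Finset.card_insert_le v.1 (insert v.2 (SA v ∪ SB v))
      have h6 := Finset.card_insert_le v.2 (SA v ∪ SB v)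
      have h7 := Finset.card_union_le (SA v) (SB v)
      omega
    -- the common membership fact for the A-side
    have hUmemA : ∀ x : (_ : Fin n × Fin n) × Fin n, x ∈ P2.sigma (fun v => SA v) →
        monomial (chi c (insert x.1.2 ({x.1.1, x.2} : Finset (Fin n)))) (1 : K)
          ∈ stanleySpace (u (π x.1)) (Z (π x.1)) := by
      intro x hx
      obtain ⟨hx1, hx2⟩ := Finset.mem_sigma.1 hx
      have hv := (hP2mem x.1).1 hx1
      obtain ⟨hne, hmem⟩ := Finset.mem_erase.1 hx2
      obtain ⟨hW2, hXf2⟩ := Finset.mem_inter.1 hmem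
      have hx2r : ((x.2 : Fin n) : ℕ) < r := (hXfmem _).1 hXf2
      have hx2Z : x.2 ∈ Z (π x.1) := by
        have hu := (Finset.mem_sdiff.1 hW2).1
        rcases Finset.mem_union.1 hu with h | h
        · exfalso
          rcases Finset.mem_insert.1 h with h' | h'
          · exact hne h'
          · have h'' := Finset.mem_singleton.1 h'
            have hv2 := hv.2
            rw [h''] at hx2r; omega
        · exact h
      obtain ⟨hd, heq⟩ := hπδ x.1 hv
      apply hspread x.1.1 x.1.2 (π x.1) (δ x.1) hv.1 hv.2 hd heq
      · exact Finset.mem_insert_of_mem (Finset.mem_insert_self _ _)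
      · exact Finset.mem_insert_self _ _
      · intro j hj
        rcases Finset.mem_insert.1 hj with h | h
        · right; left; exact h
        rcases Finset.mem_insert.1 h with h' | h'
        · left; exact h'
        · right; right; rw [Finset.mem_singleton.1 h']; exact hx2Z
    -- the common membership fact for the B-side
    have hUmemB : ∀ x : (_ : Fin n × Fin n) × Fin n, x ∈ P2.sigma (fun v => SB v) →
        monomial (chi c (insert x.1.1 ({x.1.2, x.2} : Finset (Fin n)))) (1 : K)
          ∈ stanleySpace (u (π x.1)) (Z (π x.1)) := by
      intro x hx
      obtain ⟨hx1, hx2⟩ := Finset.mem_sigma.1 hx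
      have hv := (hP2mem x.1).1 hx1
      obtain ⟨hne, hmem⟩ := Finset.mem_erase.1 hx2
      obtain ⟨hW2, hYf2⟩ := Finset.mem_inter.1 hmem
      have hx2t : t ≤ ((x.2 : Fin n) : ℕ) := (hYfmem _).1 hYf2
      have hx2Z : x.2 ∈ Z (π x.1) := by
        have hu := (Finset.mem_sdiff.1 hW2).1
        rcases Finset.mem_union.1 hu with h | h
        · exfalso
          rcases Finset.mem_insert.1 h with h' | h'
          · have hv1 := hv.1
            rw [h'] at hx2t; omega
          · exact hne (Finset.mem_singleton.1 h')
        · exact h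
      obtain ⟨hd, heq⟩ := hπδ x.1 hv
      apply hspread x.1.1 x.1.2 (π x.1) (δ x.1) hv.1 hv.2 hd heq
      · exact Finset.mem_insert_self _ _
      · exact Finset.mem_insert_of_mem (Finset.mem_insert_self _ _)
      · intro j hj
        rcases Finset.mem_insert.1 hj with h | h
        · left; exact h
        rcases Finset.mem_insert.1 h with h' | h'
        · right; left; exact h'
        · right; right; rw [Finset.mem_singleton.1 h']; exact hx2Z
    -- injectivity on the A-side
    have hinjA : Set.InjOn (fun x : (_ : Fin n × Fin n) × Fin n =>
        (({x.1.1, x.2} : Finset (Fin n)), x.1.2)) ↑(P2.sigma (fun v => SA v)) := by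
      intro x hx y hy hxy
      have hx' := Finset.mem_coe.1 hx
      have hy' := Finset.mem_coe.1 hy
      obtain ⟨hx1, hx2⟩ := Finset.mem_sigma.1 hx'
      obtain ⟨hy1, hy2⟩ := Finset.mem_sigma.1 hy'
      have hvx := (hP2mem x.1).1 hx1
      have hvy := (hP2mem y.1).1 hy1
      have hpairs : ({x.1.1, x.2} : Finset (Fin n)) = {y.1.1, y.2} :=
        (Prod.ext_iff.1 hxy).1
      have hb12 : x.1.2 = y.1.2 := (Prod.ext_iff.1 hxy).2
      have hwx := hUmemA x hx'
      have hwy := hUmemA y hy'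
      have hUeq : insert y.1.2 ({y.1.1, y.2} : Finset (Fin n))
          = insert x.1.2 ({x.1.1, x.2} : Finset (Fin n)) := by rw [hpairs, hb12]
      rw [hUeq] at hwy
      have hp := huniq _ _ _ hwx hwy
      obtain ⟨hdx, heqx⟩ := hπδ x.1 hvx
      obtain ⟨hdy, heqy⟩ := hπδ y.1 hvy
      have hsx := hbase x.1.1 x.1.2 (π x.1) (δ x.1) hvx.1 hvx.2 hdx heqx
      have hsy := hbase y.1.1 y.1.2 (π y.1) (δ y.1) hvy.1 hvy.2 hdy heqy
      rw [hp] at hsx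
      have hpe : ({x.1.1, x.1.2} : Finset (Fin n)) = {y.1.1, y.1.2} := by
        rw [← hsx, hsy]
      have ha : x.1.1 = y.1.1 := by
        have hmem2 : x.1.1 ∈ ({y.1.1, y.1.2} : Finset (Fin n)) := by
          rw [← hpe]; exact Finset.mem_insert_self _ _
        rcases Finset.mem_insert.1 hmem2 with h | h
        · exact h
        · exfalso
          have h' := Finset.mem_singleton.1 h
          have h1 := hvx.1
          have h2 := hvy.2
          rw [h'] at h1; omega
      have hnex : x.2 ≠ x.1.1 := (Finset.mem_erase.1 hx2).1
      have hc2 : x.2 = y.2 := by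
        have hmem2 : x.2 ∈ ({y.1.1, y.2} : Finset (Fin n)) := by
          rw [← hpairs]; exact Finset.mem_insert_of_mem (Finset.mem_singleton_self _)
        rcases Finset.mem_insert.1 hmem2 with h | h
        · exfalso; rw [← ha] at h; exact hnex h
        · exact Finset.mem_singleton.1 h
      have hfst : x.1 = y.1 := Prod.ext ha hb12
      exact Sigma.ext hfst (heq_of_eq hc2)
    -- injectivity on the B-side
    have hinjB : Set.InjOn (fun x : (_ : Fin n × Fin n) × Fin n =>
        (x.1.1, ({x.1.2, x.2} : Finset (Fin n)))) ↑(P2.sigma (fun v => SB v)) := by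
      intro x hx y hy hxy
      have hx' := Finset.mem_coe.1 hx
      have hy' := Finset.mem_coe.1 hy
      obtain ⟨hx1, hx2⟩ := Finset.mem_sigma.1 hx'
      obtain ⟨hy1, hy2⟩ := Finset.mem_sigma.1 hy'
      have hvx := (hP2mem x.1).1 hx1
      have hvy := (hP2mem y.1).1 hy1
      have ha : x.1.1 = y.1.1 := (Prod.ext_iff.1 hxy).1
      have hpairs : ({x.1.2, x.2} : Finset (Fin n)) = {y.1.2, y.2} :=
        (Prod.ext_iff.1 hxy).2
      have hwx := hUmemB x hx'
      have hwy := hUmemB y hy'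
      have hUeq : insert y.1.1 ({y.1.2, y.2} : Finset (Fin n))
          = insert x.1.1 ({x.1.2, x.2} : Finset (Fin n)) := by rw [hpairs, ha]
      rw [hUeq] at hwy
      have hp := huniq _ _ _ hwx hwy
      obtain ⟨hdx, heqx⟩ := hπδ x.1 hvx
      obtain ⟨hdy, heqy⟩ := hπδ y.1 hvy
      have hsx := hbase x.1.1 x.1.2 (π x.1) (δ x.1) hvx.1 hvx.2 hdx heqx
      have hsy := hbase y.1.1 y.1.2 (π y.1) (δ y.1) hvy.1 hvy.2 hdy heqy
      rw [hp] at hsx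
      have hpe : ({x.1.1, x.1.2} : Finset (Fin n)) = {y.1.1, y.1.2} := by
        rw [← hsx, hsy]
      have hb : x.1.2 = y.1.2 := by
        have hmem2 : x.1.2 ∈ ({y.1.1, y.1.2} : Finset (Fin n)) := by
          rw [← hpe]; exact Finset.mem_insert_of_mem (Finset.mem_singleton_self _)
        rcases Finset.mem_insert.1 hmem2 with h | h
        · exfalso
          have h1 := hvx.2
          have h2 := hvy.1
          rw [h] at h1; omega
        · exact Finset.mem_singleton.1 h
      have hnex : x.2 ≠ x.1.2 := (Finset.mem_erase.1 hx2).1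
      have hc2 : x.2 = y.2 := by
        have hmem2 : x.2 ∈ ({y.1.2, y.2} : Finset (Fin n)) := by
          rw [← hpairs]; exact Finset.mem_insert_of_mem (Finset.mem_singleton_self _)
        rcases Finset.mem_insert.1 hmem2 with h | h
        · exfalso; rw [← hb] at h; exact hnex h
        · exact Finset.mem_singleton.1 h
      have hfst : x.1 = y.1 := Prod.ext ha hb
      exact Sigma.ext hfst (heq_of_eq hc2)
    -- the card bounds
    have hAsum : ∑ v ∈ P2, (SA v).card ≤ r.choose 2 * (n - t) := by
      have hmaps : ∀ x ∈ P2.sigma (fun v => SA v),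
          (fun x : (_ : Fin n × Fin n) × Fin n =>
            (({x.1.1, x.2} : Finset (Fin n)), x.1.2)) x ∈ (Xf.powersetCard 2) ×ˢ Yf := by
        intro x hx
        obtain ⟨hx1, hx2⟩ := Finset.mem_sigma.1 hx
        have hv := (hP2mem x.1).1 hx1
        obtain ⟨hne, hmem⟩ := Finset.mem_erase.1 hx2
        have hXf2 := (Finset.mem_inter.1 hmem).2
        apply Finset.mem_product.2
        constructor
        · apply Finset.mem_powersetCard.2
          constructor
          · intro j hj
            rcases Finset.mem_insert.1 hj with h | h
            · rw [h]; exact (hXfmem _).2 hv.1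
            · rw [Finset.mem_singleton.1 h]; exact hXf2
          · rw [Finset.card_insert_of_notMem (Finset.notMem_singleton.2 (Ne.symm hne)),
              Finset.card_singleton]
        · exact (hYfmem _).2 hv.2
      calc ∑ v ∈ P2, (SA v).card = (P2.sigma (fun v => SA v)).card :=
            (Finset.card_sigma _ _).symm
        _ ≤ ((Xf.powersetCard 2) ×ˢ Yf).card :=
            Finset.card_le_card_of_injOn _ hmaps hinjA
        _ = r.choose 2 * (n - t) := by
            rw [Finset.card_product, Finset.card_powersetCard, hXfcard, hYfcard]
    have hBsum : ∑ v ∈ P2, (SB v).card ≤ r * (n - t).choose 2 := by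
      have hmaps : ∀ x ∈ P2.sigma (fun v => SB v),
          (fun x : (_ : Fin n × Fin n) × Fin n =>
            (x.1.1, ({x.1.2, x.2} : Finset (Fin n)))) x ∈ Xf ×ˢ (Yf.powersetCard 2) := by
        intro x hx
        obtain ⟨hx1, hx2⟩ := Finset.mem_sigma.1 hx
        have hv := (hP2mem x.1).1 hx1
        obtain ⟨hne, hmem⟩ := Finset.mem_erase.1 hx2
        have hYf2 := (Finset.mem_inter.1 hmem).2
        apply Finset.mem_product.2
        constructor
        · exact (hXfmem _).2 hv.1
        · apply Finset.mem_powersetCard.2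
          constructor
          · intro j hj
            rcases Finset.mem_insert.1 hj with h | h
            · rw [h]; exact (hYfmem _).2 hv.2
            · rw [Finset.mem_singleton.1 h]; exact hYf2
          · rw [Finset.card_insert_of_notMem (Finset.notMem_singleton.2 (Ne.symm hne)),
              Finset.card_singleton]
      calc ∑ v ∈ P2, (SB v).card = (P2.sigma (fun v => SB v)).card :=
            (Finset.card_sigma _ _).symm
        _ ≤ (Xf ×ˢ (Yf.powersetCard 2)).card :=
            Finset.card_le_card_of_injOn _ hmaps hinjB
        _ = r * (n - t).choose 2 := by
            rw [Finset.card_product, Finset.card_powersetCard, hXfcard, hYfcard]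
    -- assemble the counting inequality
    have h1 : ∑ _v ∈ P2, (k - (t - r)) ≤ ∑ v ∈ P2, ((SA v).card + (SB v).card + 2) :=
      Finset.sum_le_sum hlow
    rw [Finset.sum_const, smul_eq_mul] at h1
    have h2 : ∑ v ∈ P2, ((SA v).card + (SB v).card + 2)
        = (∑ v ∈ P2, (SA v).card) + (∑ v ∈ P2, (SB v).card) + P2.card * 2 := by
      rw [Finset.sum_add_distrib, Finset.sum_add_distrib, Finset.sum_const, smul_eq_mul]
    rw [h2] at h1
    have hP2card : P2.card = r * (n - t) := by
      rw [hP2def, Finset.card_product, hXfcard, hYfcard]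
    rw [hP2card] at h1
    set A := ∑ v ∈ P2, (SA v).card with hAdef
    set B := ∑ v ∈ P2, (SB v).card with hBdef
    set w := n - t with hwdef
    set m := k - (t - r) with hmdef
    set r1 := r - 1 with hr1def
    set w1 := w - 1 with hw1def
    have hc2a : 2 * r.choose 2 ≤ r * r1 := by
      rw [Nat.choose_two_right, hr1def]
      have := Nat.div_mul_le_self (r * (r - 1)) 2
      omega
    have hc2b : 2 * w.choose 2 ≤ w * w1 := by
      rw [Nat.choose_two_right, hw1def]
      have := Nat.div_mul_le_self (w * (w - 1)) 2
      omega
    have hbig : (r * w) * (2 * m) ≤ (r * w) * (r1 + w1 + 4) := by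
      calc (r * w) * (2 * m) = 2 * ((r * w) * m) := by ring
        _ ≤ 2 * (A + B + (r * w) * 2) := Nat.mul_le_mul_left 2 h1
        _ = 2 * A + 2 * B + 4 * (r * w) := by ring
        _ ≤ 2 * (r.choose 2 * w) + 2 * (r * w.choose 2) + 4 * (r * w) :=
            Nat.add_le_add (Nat.add_le_add (Nat.mul_le_mul_left 2 hAsum)
              (Nat.mul_le_mul_left 2 hBsum)) le_rfl
        _ = (2 * r.choose 2) * w + r * (2 * w.choose 2) + 4 * (r * w) := by ring
        _ ≤ (r * r1) * w + r * (w * w1) + 4 * (r * w) :=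
            Nat.add_le_add (Nat.add_le_add (Nat.mul_le_mul_right w hc2a)
              (Nat.mul_le_mul_left r hc2b)) le_rfl
        _ = (r * w) * (r1 + w1 + 4) := by ring
    have hposs : 0 < r * w := Nat.mul_pos (by omega) (by omega)
    have hfin : 2 * m ≤ r1 + w1 + 4 := Nat.le_of_mul_le_mul_left hbig hposs
    omega


  have hb : sdepth (Q ⊓ Q') ≤ (n + t - r + 2) / 2 := by
    unfold sdepth
    apply csSup_le'
    rintro k hk
    simp only [Set.mem_setOf_eq] at hk
    have h2k := key k hk
    omega
  omega
end

section
/- Let Q and Q' be monomial primary ideals of S = K[x_1,…,x_n] (n ≥ 2) with √Q = (x_1,…,x_{n−1}) and √Q' = (x_2,…,x_n). Then sdepth(Q ∩ Q') ≤ n − ⌊(n−1)/2⌋. -/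
open MvPolynomial

variable {K : Type*} [Field K]

/- ============ Auxiliary lemmas ============ -/

/-- The coefficient extraction as a `K`-linear map. -/
noncomputable def lcoeffK {n : ℕ} (e : Fin n →₀ ℕ) :
    MvPolynomial (Fin n) K →ₗ[K] K where
  toFun p := coeff e p
  map_add' p q := coeff_add e p q
  map_smul' c p := coeff_smul e c p

lemma coeff_eq_zero_of_mem_span {n : ℕ} {T : Set (MvPolynomial (Fin n) K)}
    {e : Fin n →₀ ℕ} (hT : ∀ w ∈ T, coeff e w = 0) {p : MvPolynomial (Fin n) K}
    (hp : p ∈ Submodule.span K T) : coeff e p = 0 := by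
  have hle : Submodule.span K T ≤ LinearMap.ker (lcoeffK (K := K) e) :=
    Submodule.span_le.mpr fun w hw => LinearMap.mem_ker.mpr (hT w hw)
  exact hle hp

lemma monomial_mem_stanleySpace {n : ℕ} {a e : Fin n →₀ ℕ} {Z : Finset (Fin n)}
    (h1 : a ≤ e) (h2 : ↑((e - a).support) ⊆ (Z : Set (Fin n))) :
    monomial e (1 : K) ∈ stanleySpace (monomial a (1 : K)) Z := by
  apply Submodule.subset_span
  exact ⟨e - a, h2, by rw [monomial_mul, one_mul, add_tsub_cancel_of_le h1]⟩

/-- Monomial membership in a Stanley-decomposed ideal is an interval condition. -/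
lemma mem_decomp_iff {n : ℕ} {I : Ideal (MvPolynomial (Fin n) K)} {s : ℕ}
    {u : Fin s → MvPolynomial (Fin n) K} {Z : Fin s → Finset (Fin n)}
    (hd : IsStanleyDecomp I u Z) (a : Fin s → (Fin n →₀ ℕ))
    (ha : ∀ i, u i = monomial (a i) 1) (e : Fin n →₀ ℕ) :
    monomial e (1 : K) ∈ I ↔
      ∃ i, a i ≤ e ∧ ↑((e - a i).support) ⊆ (Z i : Set (Fin n)) := by
  have hsup := hd.2.2
  constructor
  · intro he
    have h1 : monomial e (1 : K) ∈ ⨆ i, stanleySpace (u i) (Z i) := by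
      rw [hsup]
      exact (Submodule.restrictScalars_mem K I _).mpr he
    by_contra hno
    push_neg at hno
    have hspan : (⨆ i, stanleySpace (u i) (Z i)) =
        Submodule.span K (⋃ i, { w | ∃ d : Fin n →₀ ℕ,
          ↑d.support ⊆ (Z i : Set (Fin n)) ∧ w = u i * monomial d 1 }) :=
      (Submodule.span_iUnion _).symm
    rw [hspan] at h1
    have h0 : coeff e (monomial e (1 : K)) = 0 := by
      refine coeff_eq_zero_of_mem_span ?_ h1
      rintro w hw
      rw [Set.mem_iUnion] at hw
      obtain ⟨i, d, hdZ, rfl⟩ := hw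
      rw [ha i, monomial_mul, one_mul, coeff_monomial]
      rw [if_neg]
      intro hcon
      have hle : a i ≤ e := hcon ▸ self_le_add_right (a i) d
      have hsub : e - a i = d := by rw [← hcon]; exact add_tsub_cancel_left _ _
      exact (hno i hle) (by rw [hsub]; exact hdZ)
    simp [coeff_monomial] at h0
  · rintro ⟨i, h1, h2⟩
    have hm : monomial e (1 : K) ∈ stanleySpace (u i) (Z i) := by
      rw [ha i]; exact monomial_mem_stanleySpace h1 h2
    have : monomial e (1 : K) ∈ ⨆ i, stanleySpace (u i) (Z i) :=
      le_iSup (fun i => stanleySpace (u i) (Z i)) i hm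
    rw [hsup] at this
    exact (Submodule.restrictScalars_mem K I _).mp this

/-- A monomial cannot belong to two different Stanley spaces of a decomposition. -/
lemma not_mem_two_stanley {n : ℕ} {I : Ideal (MvPolynomial (Fin n) K)} {s : ℕ}
    {u : Fin s → MvPolynomial (Fin n) K} {Z : Fin s → Finset (Fin n)}
    (hd : IsStanleyDecomp I u Z) {i i' : Fin s} (hne : i ≠ i') {e : Fin n →₀ ℕ}
    (h1 : monomial e (1 : K) ∈ stanleySpace (u i) (Z i))
    (h2 : monomial e (1 : K) ∈ stanleySpace (u i') (Z i')) : False := by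
  have hind := hd.2.1 i
  have hle : stanleySpace (u i') (Z i') ≤
      ⨆ j, ⨆ (_ : j ≠ i), stanleySpace (u j) (Z j) :=
    le_iSup₂ (f := fun j (_ : j ≠ i) => stanleySpace (u j) (Z j)) i' hne.symm
  have h0 := Submodule.disjoint_def.mp hind _ h1 (hle h2)
  exact one_ne_zero (monomial_eq_zero.mp h0)

lemma pow_mem_of_pow_mem {R : Type*} [CommRing R] {J : Ideal R} {x : R} {m m' : ℕ}
    (h : x ^ m ∈ J) (hm : m ≤ m') : x ^ m' ∈ J := by
  rw [← Nat.sub_add_cancel hm, pow_add]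
  exact Ideal.mul_mem_left _ _ h

/-- If `Q, Q'` are monomial primary ideals with `√Q = (x_1,…,x_{n−1})` and
`√Q' = (x_2,…,x_n)`, `n ≥ 2`, then `sdepth(Q ∩ Q') ≤ n − ⌊(n−1)/2⌋`. -/
theorem sdepth_inter_le_almost_all {n : ℕ} (hn : 2 ≤ n)
    (Q Q' : Ideal (MvPolynomial (Fin n) K))
    (hQm : IsMonomialIdeal Q) (hQ'm : IsMonomialIdeal Q')
    (hQp : Q.IsPrimary) (hQ'p : Q'.IsPrimary)
    (hQr : Q.radical =
      Ideal.span ((fun i => (X i : MvPolynomial (Fin n) K)) '' {i | (i : ℕ) < n - 1}))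
    (hQ'r : Q'.radical =
      Ideal.span ((fun i => (X i : MvPolynomial (Fin n) K)) '' {i | 1 ≤ (i : ℕ)})) :
    sdepth (Q ⊓ Q') ≤ n - (n - 1) / 2 := by
  classical
  haveI : NeZero n := ⟨by omega⟩
  rw [sdepth]
  refine csSup_le' ?_
  rintro k ⟨s, u, Z, hd, hk⟩
  -- extract monomial exponents of the decomposition
  choose a ha using hd.1
  -- choose a uniform power ρ with X i ^ ρ in the relevant ideals
  have hQpow : ∀ i : Fin n, ∃ m, ((i : ℕ) < n - 1 → X i ^ m ∈ Q) := by
    intro i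
    by_cases h : (i : ℕ) < n - 1
    · have hx : (X i : MvPolynomial (Fin n) K) ∈ Q.radical := by
        rw [hQr]; exact Ideal.subset_span ⟨i, h, rfl⟩
      obtain ⟨m, hm⟩ := Ideal.mem_radical_iff.mp hx
      exact ⟨m, fun _ => hm⟩
    · exact ⟨0, fun hc => absurd hc h⟩
  have hQ'pow : ∀ i : Fin n, ∃ m, (1 ≤ (i : ℕ) → X i ^ m ∈ Q') := by
    intro i
    by_cases h : 1 ≤ (i : ℕ)
    · have hx : (X i : MvPolynomial (Fin n) K) ∈ Q'.radical := by
        rw [hQ'r]; exact Ideal.subset_span ⟨i, h, rfl⟩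
      obtain ⟨m, hm⟩ := Ideal.mem_radical_iff.mp hx
      exact ⟨m, fun _ => hm⟩
    · exact ⟨0, fun hc => absurd hc h⟩
  choose mQ hmQ using hQpow
  choose mQ' hmQ' using hQ'pow
  set ρ : ℕ := Finset.univ.sup (fun i : Fin n => max (mQ i) (mQ' i)) with hρ
  have hXQ : ∀ i : Fin n, (i : ℕ) < n - 1 → X i ^ ρ ∈ Q := by
    intro i h
    refine pow_mem_of_pow_mem (hmQ i h) ?_
    rw [hρ]
    exact le_trans (le_max_left _ _)
      (Finset.le_sup (f := fun i : Fin n => max (mQ i) (mQ' i)) (Finset.mem_univ i))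
  have hXQ' : ∀ i : Fin n, 1 ≤ (i : ℕ) → X i ^ ρ ∈ Q' := by
    intro i h
    refine pow_mem_of_pow_mem (hmQ' i h) ?_
    rw [hρ]
    exact le_trans (le_max_right _ _)
      (Finset.le_sup (f := fun i : Fin n => max (mQ i) (mQ' i)) (Finset.mem_univ i))
  -- the test exponents
  set eS : Finset (Fin n) → (Fin n →₀ ℕ) := fun S =>
    Finsupp.equivFunOnFinite.symm (fun y => if y = 0 ∨ y ∈ S then ρ else 0) with heSdef
  have heval : ∀ (S : Finset (Fin n)) (y : Fin n),
      eS S y = if y = 0 ∨ y ∈ S then ρ else 0 := by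
    intro S y
    rw [heSdef]
    exact rfl
  -- divisibility helper
  have hdvd : ∀ (f : Fin n →₀ ℕ) (y : Fin n), ρ ≤ f y →
      monomial f (1 : K) = X y ^ ρ * monomial (f - Finsupp.single y ρ) 1 := by
    intro f y hy
    rw [X_pow_eq_monomial, monomial_mul, one_mul,
      add_tsub_cancel_of_le (Finsupp.single_le_iff.mpr hy)]
  -- membership of test monomials in I
  have hzlt : ((0 : Fin n) : ℕ) < n - 1 := by
    simp only [Fin.val_zero]; omega
  have hSmem : ∀ S : Finset (Fin n), S.Nonempty → (0 : Fin n) ∉ S →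
      monomial (eS S) (1 : K) ∈ Q ⊓ Q' := by
    intro S hne h0S
    obtain ⟨j, hj⟩ := hne
    have hj0 : j ≠ 0 := fun h => h0S (h ▸ hj)
    have hj1 : 1 ≤ (j : ℕ) := by
      rcases Nat.eq_zero_or_pos (j : ℕ) with h | h
      · exact absurd (Fin.ext h : j = 0) hj0
      · exact h
    refine Submodule.mem_inf.mpr ⟨?_, ?_⟩
    · rw [hdvd (eS S) 0 (by rw [heval]; simp)]
      exact Ideal.mul_mem_right _ _ (hXQ 0 hzlt)
    · rw [hdvd (eS S) j (by rw [heval]; simp [hj])]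
      exact Ideal.mul_mem_right _ _ (hXQ' j hj1)
  -- the empty test monomial is not in I
  have hSnot : monomial (eS ∅) (1 : K) ∉ Q ⊓ Q' := by
    intro hmem
    have h2 : monomial (eS ∅) (1 : K) ∈ Q' := (Submodule.mem_inf.mp hmem).2
    have he0 : eS ∅ = Finsupp.single (0 : Fin n) ρ := by
      ext y
      rw [heval, Finsupp.single_apply]
      by_cases h : y = 0 <;> simp [h, eq_comm]
    rw [he0, ← X_pow_eq_monomial] at h2
    have hrad : (X (0 : Fin n) : MvPolynomial (Fin n) K) ∈ Q'.radical :=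
      Ideal.mem_radical_iff.mpr ⟨ρ, h2⟩
    rw [hQ'r] at hrad
    set v : Fin n → K := fun i => if i = 0 then 1 else 0 with hv
    have hker : Ideal.span ((fun i => (X i : MvPolynomial (Fin n) K)) '' {i | 1 ≤ (i : ℕ)})
        ≤ RingHom.ker (eval v) := by
      refine Ideal.span_le.mpr ?_
      rintro w ⟨i, hi, rfl⟩
      rw [SetLike.mem_coe, RingHom.mem_ker, eval_X, hv]
      have : i ≠ 0 := by
        intro h
        rw [h] at hi
        simp at hi
      simp [this]
    have := hker hrad
    rw [RingHom.mem_ker, eval_X, hv] at this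
    simp at this
  -- the interval condition
  have hiff : ∀ e : Fin n →₀ ℕ, monomial e (1 : K) ∈ Q ⊓ Q' ↔
      ∃ i, a i ≤ e ∧ ↑((e - a i).support) ⊆ (Z i : Set (Fin n)) :=
    mem_decomp_iff hd a ha
  -- B and φ
  set B : Finset (Fin n) := Finset.univ.erase (0 : Fin n) with hB
  have hBcard : B.card = n - 1 := by
    rw [hB, Finset.card_erase_of_mem (Finset.mem_univ _), Finset.card_univ,
      Fintype.card_fin]
  have hex : ∀ j ∈ B, ∃ i, a i ≤ eS {j} ∧
      ↑((eS {j} - a i).support) ⊆ (Z i : Set (Fin n)) := by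
    intro j hj
    have hj0 : j ≠ 0 := (Finset.mem_erase.mp hj).1
    exact (hiff _).mp (hSmem {j} ⟨j, Finset.mem_singleton_self j⟩
      (Finset.notMem_singleton.mpr (Ne.symm hj0)))
  have hBne : B.Nonempty := Finset.card_pos.mp (by rw [hBcard]; omega)
  haveI : Nonempty (Fin s) := ⟨(hex hBne.choose hBne.choose_spec).choose⟩
  choose! φ hφ1 hφ2 using hex
  -- injectivity of φ on B
  have hinj : ∀ j ∈ B, ∀ j' ∈ B, j ≠ j' → φ j ≠ φ j' := by
    intro j hj j' hj' hne heq
    have hj0 : j ≠ 0 := (Finset.mem_erase.mp hj).1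
    have hj'0 : j' ≠ 0 := (Finset.mem_erase.mp hj').1
    have h1 := hφ1 j hj
    have h2 := hφ2 j hj
    have h1' := hφ1 j' hj'
    rw [← heq] at h1'
    apply hSnot
    apply (hiff (eS ∅)).mpr
    refine ⟨φ j, ?_, ?_⟩
    · intro y
      by_cases hy : y = 0
      · subst hy
        calc a (φ j) 0 ≤ eS {j} 0 := h1 0
          _ = ρ := by rw [heval]; simp
          _ = eS ∅ 0 := by rw [heval]; simp
      · have hle : a (φ j) y = 0 := by
          by_cases hyj : y = j
          · have := h1' y
            rw [heval] at this
            simp only [Finset.mem_singleton] at this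
            rw [if_neg (by subst hyj; tauto)] at this
            omega
          · have := h1 y
            rw [heval] at this
            simp only [Finset.mem_singleton] at this
            rw [if_neg (by tauto)] at this
            omega
        rw [hle]
        exact Nat.zero_le _
    · intro y hy
      apply h2
      simp only [Finset.coe_sort_coe, Finset.mem_coe, Finsupp.mem_support_iff] at hy ⊢
      rw [Finsupp.tsub_apply] at hy ⊢
      have hmono : eS ∅ y ≤ eS {j} y := by
        rw [heval, heval]
        by_cases h : y = 0
        · simp [h]
        · simp [h]
      omega
  -- the sets T j and U j
  set T : Fin n → Finset (Fin n) := fun j => ((Z (φ j)).erase 0).erase j with hT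
  have herase : ∀ (t : Finset (Fin n)) (x : Fin n), t.card - 1 ≤ (t.erase x).card := by
    intro t x
    by_cases h : x ∈ t
    · rw [Finset.card_erase_of_mem h]
    · rw [Finset.erase_eq_of_notMem h]
      omega
  have hTcard : ∀ j, k - 2 ≤ (T j).card := by
    intro j
    have h1 := hk (φ j)
    have h2 := herase (Z (φ j)) 0
    have h3 := herase ((Z (φ j)).erase 0) j
    show k - 2 ≤ (((Z (φ j)).erase 0).erase j).card
    omega
  -- membership of pair monomials in the Stanley space of φ j
  have hpairE : ∀ j ∈ B, ∀ x ∈ T j,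
      a (φ j) ≤ eS {j, x} ∧
      ↑((eS {j, x} - a (φ j)).support) ⊆ (Z (φ j) : Set (Fin n)) := by
    intro j hj x hx
    obtain ⟨hxj, hx0, hxZ⟩ : x ≠ j ∧ x ≠ 0 ∧ x ∈ Z (φ j) := by
      rw [hT] at hx
      simp only [Finset.mem_erase] at hx
      exact ⟨hx.1, hx.2.1, hx.2.2⟩
    have h1 := hφ1 j hj
    have h2 := hφ2 j hj
    have hmono : ∀ y, eS {j} y ≤ eS {j, x} y := by
      intro y
      rw [heval, heval]
      by_cases h : y = 0
      · simp [h]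
      · by_cases hyj : y = j
        · simp [h, hyj]
        · simp [h, hyj]
    constructor
    · intro y
      exact le_trans (h1 y) (hmono y)
    · intro y hy
      simp only [Finset.coe_sort_coe, Finset.mem_coe, Finsupp.mem_support_iff] at hy
      rw [Finsupp.tsub_apply] at hy
      by_cases hyx : y = x
      · subst hyx
        exact hxZ
      · have heq : eS {j, x} y = eS {j} y := by
          rw [heval, heval]
          by_cases h : y = 0
          · simp [h]
          · by_cases hyj : y = j
            · simp [h, hyj]
            · simp [h, hyj, hyx]
        apply h2
        simp only [Finset.coe_sort_coe, Finset.mem_coe, Finsupp.mem_support_iff]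
        rw [heq] at hy
        rw [Finsupp.tsub_apply]
        exact hy
  have hpairmem : ∀ j ∈ B, ∀ x ∈ T j,
      monomial (eS {j, x}) (1 : K) ∈ stanleySpace (u (φ j)) (Z (φ j)) := by
    intro j hj x hx
    rw [ha (φ j)]
    exact monomial_mem_stanleySpace (hpairE j hj x hx).1 (hpairE j hj x hx).2
  set U : Fin n → Finset (Finset (Fin n)) :=
    fun j => (T j).image (fun x => ({j, x} : Finset (Fin n))) with hU
  have hTnj : ∀ j, ∀ x ∈ T j, x ≠ j := by
    intro j x hx
    have hx' : x ∈ ((Z (φ j)).erase 0).erase j := hx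
    exact (Finset.mem_erase.mp hx').1
  have hUcard : ∀ j, (U j).card = (T j).card := by
    intro j
    show ((T j).image (fun x => ({j, x} : Finset (Fin n)))).card = (T j).card
    apply Finset.card_image_of_injOn
    intro x hx y hy hxy
    have hxy' : ({j, x} : Finset (Fin n)) = {j, y} := hxy
    have hxmem : x ∈ ({j, y} : Finset (Fin n)) := by
      rw [← hxy']; simp
    rcases Finset.mem_insert.mp hxmem with h | h
    · exact absurd h (hTnj j x hx)
    · exact Finset.mem_singleton.mp h
  -- disjointness of the U j
  have hdisj : ∀ j ∈ B, ∀ j' ∈ B, j ≠ j' → Disjoint (U j) (U j') := by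
    intro j hj j' hj' hne
    rw [Finset.disjoint_left]
    intro p hp hp'
    rw [hU] at hp hp'
    obtain ⟨x, hx, hxe⟩ := Finset.mem_image.mp hp
    obtain ⟨x', hx', hx'e⟩ := Finset.mem_image.mp hp'
    have hee : ({j, x} : Finset (Fin n)) = {j', x'} := by rw [hxe, hx'e]
    have h1 := hpairmem j hj x hx
    have h2 := hpairmem j' hj' x' hx'
    rw [← hee] at h2
    exact not_mem_two_stanley hd (hinj j hj j' hj' hne) h1 h2
  -- counting
  have hsub : B.biUnion U ⊆ B.powersetCard 2 := by
    intro p hp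
    obtain ⟨j, hj, hpU⟩ := Finset.mem_biUnion.mp hp
    rw [hU] at hpU
    obtain ⟨x, hx, rfl⟩ := Finset.mem_image.mp hpU
    have hx0 : x ≠ 0 := by
      rw [hT] at hx
      exact (Finset.mem_erase.mp (Finset.mem_of_mem_erase hx)).1
    have hxj : x ≠ j := hTnj j x hx
    rw [Finset.mem_powersetCard]
    constructor
    · intro y hy
      rcases Finset.mem_insert.mp hy with h | h
      · exact h ▸ hj
      · rw [Finset.mem_singleton.mp h, hB]
        exact Finset.mem_erase.mpr ⟨hx0, Finset.mem_univ x⟩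
    · rw [Finset.card_insert_of_notMem (by simp [eq_comm]; exact fun h => hxj h.symm),
        Finset.card_singleton]
  have hcount : (n - 1) * (k - 2) ≤ (n - 1).choose 2 := by
    calc (n - 1) * (k - 2) = B.card • (k - 2) := by rw [hBcard, smul_eq_mul]
      _ ≤ ∑ j ∈ B, (T j).card :=
          Finset.card_nsmul_le_sum B _ _ (fun j _ => hTcard j)
      _ = ∑ j ∈ B, (U j).card := by
          apply Finset.sum_congr rfl
          intro j _
          rw [hUcard]
      _ = (B.biUnion U).card := (Finset.card_biUnion hdisj).symm
      _ ≤ (B.powersetCard 2).card := Finset.card_le_card hsub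
      _ = (n - 1).choose 2 := by rw [Finset.card_powersetCard, hBcard]
  -- arithmetic
  have hch : (n - 1).choose 2 = (n - 1) * (n - 1 - 1) / 2 := Nat.choose_two_right _
  have h2 : 2 * ((n - 1) * (k - 2)) ≤ (n - 1) * (n - 1 - 1) := by omega
  have h3 : (n - 1) * (2 * (k - 2)) ≤ (n - 1) * (n - 1 - 1) := by
    calc (n - 1) * (2 * (k - 2)) = 2 * ((n - 1) * (k - 2)) := by ring
      _ ≤ (n - 1) * (n - 1 - 1) := h2
  have h4 : 2 * (k - 2) ≤ n - 1 - 1 :=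
    Nat.le_of_mul_le_mul_left h3 (by omega)
  omega
end

section
/- Let Q and Q' be monomial primary ideals of S = K[x_1,…,x_n] with √Q = (x_1,…,x_t) and √Q' = (x_{r+1},…,x_n), where 1 < r ≤ t < n. Then sdepth(Q ∩ Q') ≤ min{ n − ⌊t/2⌋, n − ⌊(n−t)/2⌋ }. -/
open MvPolynomial

variable {K : Type*} [Field K]

/-! ### Auxiliary lemmas -/

section Aux

variable {n : ℕ}

lemma aux_monomial_mem_stanleySpace {du e : Fin n →₀ ℕ} {Z : Finset (Fin n)}
    (he : ↑e.support ⊆ (Z : Set (Fin n))) :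
    monomial (du + e) (1 : K) ∈ stanleySpace (monomial du 1) Z := by
  apply Submodule.subset_span
  exact ⟨e, he, by rw [monomial_mul, one_mul]⟩

lemma aux_monomial_mem_span_elim {s : ℕ} (u : Fin s → MvPolynomial (Fin n) K)
    (ud : Fin s → (Fin n →₀ ℕ)) (hud : ∀ i, u i = monomial (ud i) 1)
    (Z : Fin s → Finset (Fin n)) {d : Fin n →₀ ℕ}
    (hm : monomial d (1 : K) ∈ ⨆ i, stanleySpace (u i) (Z i)) :
    ∃ i : Fin s, ∃ e : Fin n →₀ ℕ, ↑e.support ⊆ (Z i : Set (Fin n)) ∧ d = ud i + e := by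
  by_contra hcon
  push_neg at hcon
  have hle : (⨆ i, stanleySpace (u i) (Z i)) ≤ LinearMap.ker (lcoeff K d) := by
    refine iSup_le fun i => ?_
    refine Submodule.span_le.2 ?_
    rintro w ⟨e, hsupp, rfl⟩
    simp only [SetLike.mem_coe, LinearMap.mem_ker, lcoeff_apply]
    rw [hud i, monomial_mul, one_mul, coeff_monomial, if_neg]
    intro h
    exact hcon i e hsupp h.symm
  have h2 := hle hm
  simp only [LinearMap.mem_ker, lcoeff_apply, coeff_monomial, if_pos rfl] at h2
  exact one_ne_zero h2

lemma aux_unique {s : ℕ} {f : Fin s → Submodule K (MvPolynomial (Fin n) K)}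
    (hindep : iSupIndep f) {d : Fin n →₀ ℕ} {i j : Fin s}
    (hi : monomial d (1 : K) ∈ f i) (hj : monomial d (1 : K) ∈ f j) : i = j := by
  by_contra hne
  have hji : j ≠ i := fun h => hne h.symm
  have hle : f j ≤ ⨆ (j' : Fin s) (_ : j' ≠ i), f j' :=
    le_iSup₂ (f := fun (j' : Fin s) (_ : j' ≠ i) => f j') j hji
  have h1 : monomial d (1 : K) ∈ ⨆ (j' : Fin s) (_ : j' ≠ i), f j' := hle hj
  have h0 := Submodule.disjoint_def.1 (hindep i) _ hi h1
  exact one_ne_zero (monomial_eq_zero.1 h0)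

lemma aux_choose_two : ∀ t : ℕ, 2 * Nat.choose t 2 = t * (t - 1)
  | 0 => rfl
  | 1 => rfl
  | (m + 2) => by
    rw [Nat.choose_succ_succ, Nat.mul_add, aux_choose_two (m + 1), Nat.choose_one_right]
    have h : m + 2 - 1 = m + 1 := by omega
    have h2 : m + 1 - 1 = m := by omega
    rw [h, h2]
    ring

lemma aux_monomial_not_mem_span_X {A : Set (Fin n)} {d : Fin n →₀ ℕ}
    (hd : ∀ a ∈ A, d a = 0) :
    monomial d (1 : K) ∉ Ideal.span ((fun i => (X i : MvPolynomial (Fin n) K)) '' A) := by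
  classical
  intro hmem
  set φ : MvPolynomial (Fin n) K →ₐ[K] MvPolynomial (Fin n) K :=
    aeval (fun i : Fin n => if i ∈ A then 0 else (X i : MvPolynomial (Fin n) K)) with hφ
  have hker : Ideal.span ((fun i => (X i : MvPolynomial (Fin n) K)) '' A) ≤
      RingHom.ker φ.toRingHom := by
    rw [Ideal.span_le]
    rintro w ⟨a, ha, rfl⟩
    simp [φ, RingHom.mem_ker, if_pos ha]
  have h0 : φ (monomial d 1) = 0 := hker hmem
  rw [aeval_monomial] at h0
  have hprod : (d.prod fun i k => (if i ∈ A then (0 : MvPolynomial (Fin n) K) else X i) ^ k)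
      = d.prod fun i k => (X i) ^ k := by
    apply Finsupp.prod_congr
    intro i hi
    rw [if_neg]
    intro hiA
    exact (Finsupp.mem_support_iff.1 hi) (hd i hiA)
  rw [map_one, one_mul, hprod] at h0
  have : monomial d (1 : K) = 0 := by
    rw [monomial_eq, map_one, one_mul, h0]
  exact one_ne_zero (monomial_eq_zero.1 this)

lemma aux_monomial_mem_of_le {J : Ideal (MvPolynomial (Fin n) K)} {c d : Fin n →₀ ℕ}
    (hc : monomial c (1 : K) ∈ J) (hle : c ≤ d) : monomial d (1 : K) ∈ J := by
  have h : monomial d (1 : K) = monomial (d - c) 1 * monomial c 1 := by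
    rw [monomial_mul, one_mul, tsub_add_cancel_of_le hle]
  rw [h]
  exact Ideal.mul_mem_left _ _ hc

lemma aux_pow_mem {J : Ideal (MvPolynomial (Fin n) K)} {x : MvPolynomial (Fin n) K}
    {m M : ℕ} (h : x ^ m ∈ J) (hm : m ≤ M) : x ^ M ∈ J := by
  rw [← Nat.sub_add_cancel hm, pow_add]
  exact Ideal.mul_mem_left _ _ h

lemma aux_socle (J : Ideal (MvPolynomial (Fin n) K)) (Aset : Finset (Fin n)) (N : ℕ)
    (hNpos : 0 < N) (hN : ∀ a ∈ Aset, (X a : MvPolynomial (Fin n) K) ^ N ∈ J)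
    (hJ : J ≠ ⊤) :
    ∃ d : Fin n →₀ ℕ, d.support ⊆ Aset ∧ monomial d (1 : K) ∉ J ∧
      ∀ a ∈ Aset, monomial (d + Finsupp.single a 1) (1 : K) ∈ J := by
  classical
  have hbound : ∀ d : Fin n →₀ ℕ, d.support ⊆ Aset → monomial d (1 : K) ∉ J →
      (d.sum fun _ x => x) ≤ n * N := by
    intro d hsupp hd
    have hlt : ∀ a : Fin n, d a ≤ N := by
      intro a
      by_contra hge
      push_neg at hge
      have haA : a ∈ Aset := hsupp (Finsupp.mem_support_iff.2 (by omega))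
      have hXa : monomial (Finsupp.single a N) (1 : K) ∈ J := by
        rw [← X_pow_eq_monomial]; exact hN a haA
      apply hd
      apply aux_monomial_mem_of_le hXa
      rw [Finsupp.le_def]
      intro x
      rcases eq_or_ne a x with rfl | hax
      · simp; omega
      · simp [Finsupp.single_apply, hax]
    calc (d.sum fun _ x => x) = ∑ a ∈ d.support, d a := rfl
    _ ≤ ∑ a ∈ Finset.univ, d a :=
        Finset.sum_le_sum_of_subset (Finset.subset_univ _)
    _ ≤ ∑ _a ∈ (Finset.univ : Finset (Fin n)), N := Finset.sum_le_sum fun a _ => hlt a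
    _ = n * N := by simp [Finset.sum_const, mul_comm]
  have key : ∀ m : ℕ, ∀ d : Fin n →₀ ℕ, d.support ⊆ Aset → monomial d (1 : K) ∉ J →
      n * N + 1 ≤ m + (d.sum fun _ x => x) →
      ∃ d' : Fin n →₀ ℕ, d'.support ⊆ Aset ∧ monomial d' (1 : K) ∉ J ∧
        ∀ a ∈ Aset, monomial (d' + Finsupp.single a 1) (1 : K) ∈ J := by
    intro m
    induction m with
    | zero =>
      intro d hsupp hd hsum
      have := hbound d hsupp hd
      omega
    | succ m ih =>
      intro d hsupp hd hsum
      by_cases hall : ∀ a ∈ Aset, monomial (d + Finsupp.single a 1) (1 : K) ∈ J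
      · exact ⟨d, hsupp, hd, hall⟩
      · push_neg at hall
        obtain ⟨a, ha, hna⟩ := hall
        refine ih (d + Finsupp.single a 1) ?_ hna ?_
        · refine Finsupp.support_add.trans (Finset.union_subset hsupp ?_)
          exact Finsupp.support_single_subset.trans (by simpa using ha)
        · rw [Finsupp.sum_add_index' (fun _ => rfl) (fun _ _ _ => rfl),
            Finsupp.sum_single_index (by rfl)]
          omega
  refine key (n * N + 1) 0 (by simp) ?_ (by simp)
  rw [show ((monomial 0 (1 : K)) : MvPolynomial (Fin n) K) = 1 by simp]
  exact (Ideal.ne_top_iff_one J).1 hJ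

end Aux

section Main

variable {n : ℕ}

lemma aux_setup (J J' : Ideal (MvPolynomial (Fin n) K)) (A : Finset (Fin n))
    (wd zd : Fin n →₀ ℕ)
    (hwnot : monomial wd (1 : K) ∉ J)
    (hwstep : ∀ a ∈ A, monomial (wd + Finsupp.single a 1) (1 : K) ∈ J)
    (hznotrad : monomial zd (1 : K) ∉ J.radical)
    (hJp : J.IsPrimary)
    (hz' : monomial zd (1 : K) ∈ J') :
    (monomial (wd + zd) (1 : K) ∉ J ⊓ J') ∧
    (∀ a ∈ A, monomial ((wd + zd) + Finsupp.single a 1) (1 : K) ∈ J ⊓ J') ∧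
    (∀ a ∈ A, ∀ c ∈ A, a ≠ c →
      monomial ((wd + zd) + Finsupp.single a 1 + Finsupp.single c 1) (1 : K) ∈ J ⊓ J') := by
  refine ⟨?_, ?_, ?_⟩
  · intro h
    have hJmem : monomial wd (1 : K) * monomial zd 1 ∈ J := by
      rw [monomial_mul, one_mul]
      exact (Submodule.mem_inf.1 h).1
    rcases (Ideal.isPrimary_iff.1 hJp).2 hJmem with h1 | h2
    · exact hwnot h1
    · exact hznotrad h2
  · intro a ha
    refine Submodule.mem_inf.2 ⟨?_, ?_⟩
    · refine aux_monomial_mem_of_le (hwstep a ha) ?_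
      have he : (wd + zd) + Finsupp.single a 1 = (wd + Finsupp.single a 1) + zd := by
        abel
      rw [he]
      exact le_self_add
    · refine aux_monomial_mem_of_le hz' ?_
      have he : (wd + zd) + Finsupp.single a 1 = zd + (wd + Finsupp.single a 1) := by
        abel
      rw [he]
      exact le_self_add
  · intro a ha c hc hac
    refine Submodule.mem_inf.2 ⟨?_, ?_⟩
    · refine aux_monomial_mem_of_le (hwstep a ha) ?_
      have he : (wd + zd) + Finsupp.single a 1 + Finsupp.single c 1
          = (wd + Finsupp.single a 1) + (zd + Finsupp.single c 1) := by abel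
      rw [he]
      exact le_self_add
    · refine aux_monomial_mem_of_le hz' ?_
      have he : (wd + zd) + Finsupp.single a 1 + Finsupp.single c 1
          = zd + (wd + Finsupp.single a 1 + Finsupp.single c 1) := by abel
      rw [he]
      exact le_self_add

lemma aux_main_bound {s k : ℕ} (I : Ideal (MvPolynomial (Fin n) K))
    (u : Fin s → MvPolynomial (Fin n) K) (Z : Fin s → Finset (Fin n))
    (hdec : IsStanleyDecomp I u Z) (hk : ∀ i, k ≤ (Z i).card)
    (A : Finset (Fin n)) (hA : A.Nonempty) (vd : Fin n →₀ ℕ)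
    (hv : monomial vd (1 : K) ∉ I)
    (h1 : ∀ a ∈ A, monomial (vd + Finsupp.single a 1) (1 : K) ∈ I)
    (h2 : ∀ a ∈ A, ∀ c ∈ A, a ≠ c →
      monomial (vd + Finsupp.single a 1 + Finsupp.single c 1) (1 : K) ∈ I) :
    2 * k + A.card ≤ 2 * n + 1 := by
  classical
  obtain ⟨humon, hindep, hsumI⟩ := hdec
  rcases Nat.eq_zero_or_pos s with hs | hs
  · exfalso
    subst hs
    obtain ⟨a, ha⟩ := hA
    have hbot : (⊥ : Submodule K (MvPolynomial (Fin n) K)) = Submodule.restrictScalars K I := by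
      rw [← hsumI]; exact (iSup_of_empty _).symm
    have : monomial (vd + Finsupp.single a 1) (1 : K) ∈
        (⊥ : Submodule K (MvPolynomial (Fin n) K)) := by
      rw [hbot]; exact (Submodule.restrictScalars_mem _ _ _).2 (h1 a ha)
    exact one_ne_zero (monomial_eq_zero.1 (Submodule.mem_bot _ |>.1 this))
  haveI : Nonempty (Fin s) := ⟨⟨0, hs⟩⟩
  choose ud hud using humon
  -- membership in I gives a Stanley space
  have memI_elim : ∀ d : Fin n →₀ ℕ, monomial d (1 : K) ∈ I →
      ∃ i : Fin s, ∃ e : Fin n →₀ ℕ, ↑e.support ⊆ (Z i : Set (Fin n)) ∧ d = ud i + e := by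
    intro d hd
    refine aux_monomial_mem_span_elim u ud hud Z ?_
    rw [hsumI]
    exact (Submodule.restrictScalars_mem _ _ _).2 hd
  -- membership in a Stanley space gives membership in I
  have space_to_I : ∀ (i : Fin s) (p : MvPolynomial (Fin n) K),
      p ∈ stanleySpace (u i) (Z i) → p ∈ I := by
    intro i p hp
    have h := le_iSup (fun i => stanleySpace (u i) (Z i)) i hp
    rw [hsumI] at h
    exact (Submodule.restrictScalars_mem _ _ _).1 h
  -- choice of space for the "singleton" monomials
  have hex : ∀ a : Fin n, ∃ ie : Fin s × (Fin n →₀ ℕ), a ∈ A →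
      (↑ie.2.support ⊆ (Z ie.1 : Set (Fin n)) ∧
        vd + Finsupp.single a 1 = ud ie.1 + ie.2) := by
    intro a
    by_cases ha : a ∈ A
    · obtain ⟨i, e, hsupp, heq⟩ := memI_elim _ (h1 a ha)
      exact ⟨(i, e), fun _ => ⟨hsupp, heq⟩⟩
    · exact ⟨(Classical.arbitrary _, 0), fun h => absurd h ha⟩
  choose f hf0 using hex
  set idx : Fin n → Fin s := fun a => (f a).1 with hidx
  set ee : Fin n → (Fin n →₀ ℕ) := fun a => (f a).2 with hee
  have hf : ∀ a ∈ A, ↑(ee a).support ⊆ (Z (idx a) : Set (Fin n)) ∧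
      vd + Finsupp.single a 1 = ud (idx a) + ee a := hf0
  -- membership of the "pair" monomials
  have pairmem : ∀ a ∈ A, ∀ c ∈ Z (idx a), c ≠ a →
      monomial (vd + Finsupp.single a 1 + Finsupp.single c 1) (1 : K)
        ∈ stanleySpace (u (idx a)) (Z (idx a)) := by
    intro a ha c hcZ hca
    obtain ⟨hsupp, heq⟩ := hf a ha
    have he : vd + Finsupp.single a 1 + Finsupp.single c 1
        = ud (idx a) + (ee a + Finsupp.single c 1) := by
      rw [heq]; abel
    rw [he, hud (idx a)]
    refine aux_monomial_mem_stanleySpace ?_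
    refine subset_trans (Finset.coe_subset.2 Finsupp.support_add) ?_
    rw [Finset.coe_union]
    refine Set.union_subset hsupp ?_
    refine subset_trans (Finset.coe_subset.2 Finsupp.support_single_subset) ?_
    simp [hcZ]
  -- the key impossibility
  have hkey : ∀ a ∈ A, ∀ c ∈ A, a ≠ c → c ∈ Z (idx a) → a ∈ Z (idx c) → False := by
    intro a ha c hc hac hcZ haZ
    have hmem1 := pairmem a ha c hcZ (Ne.symm hac)
    have hmem2' := pairmem c hc a haZ hac
    have hcomm : vd + Finsupp.single c 1 + Finsupp.single a 1
        = vd + Finsupp.single a 1 + Finsupp.single c 1 := by abel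
    rw [hcomm] at hmem2'
    have hij : idx a = idx c := aux_unique hindep hmem1 hmem2'
    obtain ⟨hsa, hea⟩ := hf a ha
    obtain ⟨hsc, hec⟩ := hf c hc
    rw [← hij] at hsc hec
    -- ud (idx a) ≤ vd
    have hle : ud (idx a) ≤ vd := by
      rw [Finsupp.le_def]
      intro x
      rcases eq_or_ne x a with rfl | hxa
      · have := DFunLike.congr_fun hec x
        simp only [Finsupp.add_apply] at this
        have hsx : Finsupp.single c 1 x = 0 := by
          simp [Finsupp.single_apply, Ne.symm hac]
        omega
      · have := DFunLike.congr_fun hea x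
        simp only [Finsupp.add_apply] at this
        have hsx : Finsupp.single a 1 x = 0 := by
          rw [Finsupp.single_apply, if_neg (fun h => hxa h.symm)]
        omega
    have hsupp : ↑(vd - ud (idx a)).support ⊆ (Z (idx a) : Set (Fin n)) := by
      intro x hx
      have hxne : vd x - ud (idx a) x ≠ 0 := by
        have := Finsupp.mem_support_iff.1 (Finset.mem_coe.1 hx)
        rwa [Finsupp.tsub_apply] at this
      apply hsa
      rw [Finset.mem_coe, Finsupp.mem_support_iff]
      have heax := DFunLike.congr_fun hea x
      simp only [Finsupp.add_apply] at heax
      have hsx : Finsupp.single a 1 x ≤ 1 := by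
        rcases eq_or_ne a x with rfl | h
        · simp
        · simp [Finsupp.single_apply, h]
      omega
    have hvmem : monomial vd (1 : K) ∈ stanleySpace (u (idx a)) (Z (idx a)) := by
      have hv2 : vd = ud (idx a) + (vd - ud (idx a)) := (add_tsub_cancel_of_le hle).symm
      rw [hv2, hud (idx a)]
      exact aux_monomial_mem_stanleySpace hsupp
    exact hv (space_to_I _ _ hvmem)
  -- the cardinality bound for each a
  set F : Fin n → Finset (Fin n) := fun a => (Z (idx a) ∩ A).erase a with hF
  have hcard : ∀ a ∈ A, k ≤ (F a).card + 1 + (n - A.card) := by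
    intro a ha
    have hinter := Finset.card_inter_add_card_sdiff (Z (idx a)) A
    have hsd : (Z (idx a) \ A).card ≤ n - A.card := by
      have hsub : (Z (idx a) \ A) ⊆ Aᶜ := fun x hx =>
        Finset.mem_compl.2 (Finset.mem_sdiff.1 hx).2
      calc (Z (idx a) \ A).card ≤ (Aᶜ).card := Finset.card_le_card hsub
      _ = n - A.card := by rw [Finset.card_compl, Fintype.card_fin]
    have hFa : F a = (Z (idx a) ∩ A).erase a := rfl
    have h2' : (Z (idx a) ∩ A).card ≤ (F a).card + 1 := by
      rw [hFa]
      by_cases haZ : a ∈ Z (idx a) ∩ A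
      · rw [Finset.card_erase_add_one haZ]
      · rw [Finset.erase_eq_of_notMem haZ]; omega
    have := hk (idx a)
    omega
  -- the pairs counting
  have hsum1 : ∑ a ∈ A, (F a).card ≤ Nat.choose A.card 2 := by
    rw [← Finset.card_sigma, ← Finset.card_powersetCard 2 A]
    apply Finset.card_le_card_of_injOn (fun p => {p.1, p.2})
    · rintro ⟨a, c⟩ hp
      rw [Finset.mem_coe, Finset.mem_sigma] at hp
      obtain ⟨ha, hc⟩ := hp
      have hFa : F a = (Z (idx a) ∩ A).erase a := rfl
      rw [hFa] at hc
      have hcA : c ∈ A := (Finset.mem_inter.1 (Finset.mem_erase.1 hc).2).2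
      have hca : c ≠ a := (Finset.mem_erase.1 hc).1
      rw [Finset.mem_coe, Finset.mem_powersetCard]
      constructor
      · intro x hx
        rcases Finset.mem_insert.1 hx with rfl | hx
        · exact ha
        · rw [Finset.mem_singleton.1 hx]; exact hcA
      · rw [Finset.card_insert_of_notMem (by simp [Ne.symm hca]), Finset.card_singleton]
    · rintro ⟨a, c⟩ hp ⟨a', c'⟩ hp' hpair
      rw [Finset.mem_coe, Finset.mem_sigma] at hp hp'
      obtain ⟨ha, hc⟩ := hp
      obtain ⟨ha', hc'⟩ := hp'
      have hFa : F a = (Z (idx a) ∩ A).erase a := rfl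
      have hFa' : F a' = (Z (idx a') ∩ A).erase a' := rfl
      rw [hFa] at hc
      rw [hFa'] at hc'
      have hcA : c ∈ A := (Finset.mem_inter.1 (Finset.mem_erase.1 hc).2).2
      have hca : c ≠ a := (Finset.mem_erase.1 hc).1
      have hcZ : c ∈ Z (idx a) := (Finset.mem_inter.1 (Finset.mem_erase.1 hc).2).1
      have hc'a' : c' ≠ a' := (Finset.mem_erase.1 hc').1
      have hc'Z : c' ∈ Z (idx a') := (Finset.mem_inter.1 (Finset.mem_erase.1 hc').2).1
      have hpair' : ({a, c} : Finset (Fin n)) = {a', c'} := hpair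
      have haIn : a ∈ ({a', c'} : Finset (Fin n)) := by
        rw [← hpair']; exact Finset.mem_insert_self _ _
      have ha'In : a' ∈ ({a, c} : Finset (Fin n)) := by
        rw [hpair']; exact Finset.mem_insert_self _ _
      rcases Finset.mem_insert.1 haIn with h1x | h1x
      · -- a = a'
        have hcc : c = c' := by
          have hcIn : c ∈ ({a', c'} : Finset (Fin n)) := by
            rw [← hpair']; exact Finset.mem_insert_of_mem (Finset.mem_singleton_self _)
          rcases Finset.mem_insert.1 hcIn with h2x | h2x
          · exact absurd (h2x.trans h1x.symm) hca
          · exact Finset.mem_singleton.1 h2x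
        subst h1x; subst hcc; rfl
      · have h1x' : a = c' := Finset.mem_singleton.1 h1x
        have h3 : a' = c := by
          rcases Finset.mem_insert.1 ha'In with h | h
          · exfalso; exact hc'a' (h1x'.symm.trans h.symm)
          · exact Finset.mem_singleton.1 h
        exfalso
        rw [← h1x', h3] at hc'Z
        exact hkey a ha c hcA (Ne.symm hca) hcZ hc'Z
  -- put everything together
  have htpos : 0 < A.card := Finset.card_pos.2 hA
  have hAn : A.card ≤ n := by
    have := Finset.card_le_card (Finset.subset_univ A)
    simpa using this
  set t := A.card with ht
  have hsum2 : t * k ≤ (∑ a ∈ A, (F a).card) + t * (1 + (n - t)) := by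
    calc t * k = ∑ _a ∈ A, k := by rw [Finset.sum_const, smul_eq_mul]
    _ ≤ ∑ a ∈ A, ((F a).card + (1 + (n - t))) :=
        Finset.sum_le_sum (fun a ha => by have := hcard a ha; omega)
    _ = (∑ a ∈ A, (F a).card) + t * (1 + (n - t)) := by
        rw [Finset.sum_add_distrib, Finset.sum_const, smul_eq_mul]
  have hch : 2 * Nat.choose t 2 = t * (t - 1) := aux_choose_two t
  have hmul : t * (2 * k) ≤ t * (2 * n + 1 - t) := by
    have e1 : (t - 1) + 2 * (1 + (n - t)) = 2 * n + 1 - t := by omega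
    calc t * (2 * k) = 2 * (t * k) := by ring
    _ ≤ 2 * ((∑ a ∈ A, (F a).card) + t * (1 + (n - t))) := Nat.mul_le_mul_left 2 hsum2
    _ ≤ 2 * (Nat.choose t 2 + t * (1 + (n - t))) :=
        Nat.mul_le_mul_left 2 (Nat.add_le_add_right hsum1 _)
    _ = t * ((t - 1) + 2 * (1 + (n - t))) := by rw [Nat.mul_add, hch]; ring
    _ = t * (2 * n + 1 - t) := by rw [e1]
  have hfin := Nat.le_of_mul_le_mul_left hmul htpos
  omega

end Main

/-- If `Q, Q'` are monomial primary ideals with `√Q = (x_1,…,x_t)` and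
`√Q' = (x_{r+1},…,x_n)`, `1 < r ≤ t < n`, then
`sdepth(Q ∩ Q') ≤ min{n − ⌊t/2⌋, n − ⌊(n−t)/2⌋}`. -/
theorem sdepth_inter_le_min {n t r : ℕ} (hr : 1 < r) (hrt : r ≤ t) (htn : t < n)
    (Q Q' : Ideal (MvPolynomial (Fin n) K))
    (hQm : IsMonomialIdeal Q) (hQ'm : IsMonomialIdeal Q')
    (hQp : Q.IsPrimary) (hQ'p : Q'.IsPrimary)
    (hQr : Q.radical =
      Ideal.span ((fun i => (X i : MvPolynomial (Fin n) K)) '' {i | (i : ℕ) < t}))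
    (hQ'r : Q'.radical =
      Ideal.span ((fun i => (X i : MvPolynomial (Fin n) K)) '' {i | r ≤ (i : ℕ)})) :
    sdepth (Q ⊓ Q') ≤ min (n - t / 2) (n - (n - t) / 2) := by
  classical
  -- uniform exponent N
  have hex1 : ∀ a : Fin n, ∃ m : ℕ, (a : ℕ) < t → (X a : MvPolynomial (Fin n) K) ^ m ∈ Q := by
    intro a
    by_cases ha : (a : ℕ) < t
    · obtain ⟨m, hm⟩ := Ideal.mem_radical_iff.1
        (show (X a : MvPolynomial (Fin n) K) ∈ Q.radical by
          rw [hQr]; exact Ideal.subset_span ⟨a, ha, rfl⟩)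
      exact ⟨m, fun _ => hm⟩
    · exact ⟨0, fun h => absurd h ha⟩
  have hex2 : ∀ a : Fin n, ∃ m : ℕ, r ≤ (a : ℕ) → (X a : MvPolynomial (Fin n) K) ^ m ∈ Q' := by
    intro a
    by_cases ha : r ≤ (a : ℕ)
    · obtain ⟨m, hm⟩ := Ideal.mem_radical_iff.1
        (show (X a : MvPolynomial (Fin n) K) ∈ Q'.radical by
          rw [hQ'r]; exact Ideal.subset_span ⟨a, ha, rfl⟩)
      exact ⟨m, fun _ => hm⟩
    · exact ⟨0, fun h => absurd h ha⟩
  choose m1 hm1 using hex1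
  choose m2 hm2 using hex2
  set N : ℕ := (Finset.univ.sup m1) + (Finset.univ.sup m2) + 1 with hN
  have hNpos : 0 < N := by omega
  have hNQ : ∀ a : Fin n, (a : ℕ) < t → (X a : MvPolynomial (Fin n) K) ^ N ∈ Q := by
    intro a ha
    refine aux_pow_mem (hm1 a ha) ?_
    have := Finset.le_sup (f := m1) (Finset.mem_univ a)
    omega
  have hNQ' : ∀ a : Fin n, r ≤ (a : ℕ) → (X a : MvPolynomial (Fin n) K) ^ N ∈ Q' := by
    intro a ha
    refine aux_pow_mem (hm2 a ha) ?_
    have := Finset.le_sup (f := m2) (Finset.mem_univ a)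
    omega
  -- the two variable sets
  set A1 : Finset (Fin n) := Finset.univ.filter (fun i : Fin n => (i : ℕ) < t) with hA1
  set A2 : Finset (Fin n) := Finset.univ.filter (fun i : Fin n => r ≤ (i : ℕ)) with hA2
  have hA1card : A1.card = t := by
    apply Finset.card_eq_of_bijective (fun i hi => (⟨i, lt_trans hi htn⟩ : Fin n))
    · intro a ha
      rw [hA1, Finset.mem_filter] at ha
      exact ⟨(a : ℕ), ha.2, by simp⟩
    · intro i hi
      rw [hA1, Finset.mem_filter]
      exact ⟨Finset.mem_univ _, by simpa using hi⟩
    · intro i j hi hj hij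
      simpa using congrArg Fin.val hij
  have hA2card : A2.card = n - r := by
    apply Finset.card_eq_of_bijective (fun i hi => (⟨r + i, by omega⟩ : Fin n))
    · intro a ha
      rw [hA2, Finset.mem_filter] at ha
      refine ⟨(a : ℕ) - r, by omega, ?_⟩
      have : (a : ℕ) < n := a.isLt
      apply Fin.ext
      simp
      omega
    · intro i hi
      rw [hA2, Finset.mem_filter]
      refine ⟨Finset.mem_univ _, ?_⟩
      simp
    · intro i j hi hj hij
      have := congrArg Fin.val hij
      simp at this
      omega
  -- socle elements
  obtain ⟨w1, hw1supp, hw1not, hw1step⟩ := aux_socle Q A1 N hNpos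
    (fun a ha => hNQ a (by rw [hA1, Finset.mem_filter] at ha; exact ha.2))
    (Ideal.isPrimary_iff.1 hQp).1
  obtain ⟨w2, hw2supp, hw2not, hw2step⟩ := aux_socle Q' A2 N hNpos
    (fun a ha => hNQ' a (by rw [hA2, Finset.mem_filter] at ha; exact ha.2))
    (Ideal.isPrimary_iff.1 hQ'p).1
  -- the complementary monomials
  set zd1 : Fin n →₀ ℕ :=
    Finsupp.equivFunOnFinite.symm (fun b : Fin n => if (b : ℕ) < t then 0 else N) with hzd1
  set zd2 : Fin n →₀ ℕ :=
    Finsupp.equivFunOnFinite.symm (fun b : Fin n => if r ≤ (b : ℕ) then 0 else N) with hzd2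
  have hzd1app : ∀ b : Fin n, zd1 b = if (b : ℕ) < t then 0 else N := by
    intro b; rw [hzd1]; simp
  have hzd2app : ∀ b : Fin n, zd2 b = if r ≤ (b : ℕ) then 0 else N := by
    intro b; rw [hzd2]; simp
  -- zd1 ∈ Q'
  have hzd1Q' : monomial zd1 (1 : K) ∈ Q' := by
    have ht' : (⟨t, htn⟩ : Fin n) = (⟨t, htn⟩ : Fin n) := rfl
    refine aux_monomial_mem_of_le (c := Finsupp.single (⟨t, htn⟩ : Fin n) N) ?_ ?_
    · rw [← X_pow_eq_monomial]
      exact hNQ' _ (by simpa using hrt)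
    · rw [Finsupp.le_def]
      intro x
      rcases eq_or_ne (⟨t, htn⟩ : Fin n) x with rfl | hx
      · rw [hzd1app]
        have hnt : ¬ (((⟨t, htn⟩ : Fin n) : ℕ) < t) := by simp
        rw [if_neg hnt, Finsupp.single_apply, if_pos rfl]
      · rw [Finsupp.single_apply, if_neg hx]
        exact Nat.zero_le _
  -- zd2 ∈ Q
  have hzd2Q : monomial zd2 (1 : K) ∈ Q := by
    have h0n : 0 < n := by omega
    refine aux_monomial_mem_of_le (c := Finsupp.single (⟨0, h0n⟩ : Fin n) N) ?_ ?_
    · rw [← X_pow_eq_monomial]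
      exact hNQ _ (by simp; omega)
    · rw [Finsupp.le_def]
      intro x
      rcases eq_or_ne (⟨0, h0n⟩ : Fin n) x with rfl | hx
      · rw [hzd2app]
        have hnr : ¬ (r ≤ ((⟨0, h0n⟩ : Fin n) : ℕ)) := by simp only [Fin.val_mk]; omega
        rw [if_neg hnr, Finsupp.single_apply, if_pos rfl]
      · rw [Finsupp.single_apply, if_neg hx]
        exact Nat.zero_le _
  -- zd1 not in radical of Q
  have hzd1rad : monomial zd1 (1 : K) ∉ Q.radical := by
    rw [hQr]
    apply aux_monomial_not_mem_span_X
    intro a ha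
    have ha' : (a : ℕ) < t := ha
    rw [hzd1app, if_pos ha']
  have hzd2rad : monomial zd2 (1 : K) ∉ Q'.radical := by
    rw [hQ'r]
    apply aux_monomial_not_mem_span_X
    intro a ha
    have ha' : r ≤ (a : ℕ) := ha
    rw [hzd2app, if_pos ha']
  -- setups
  obtain ⟨hnot1, hone1, htwo1⟩ := aux_setup Q Q' A1 w1 zd1 hw1not hw1step hzd1rad hQp hzd1Q'
  obtain ⟨hnot2, hone2, htwo2⟩ := aux_setup Q' Q A2 w2 zd2 hw2not hw2step hzd2rad hQ'p hzd2Q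
  rw [inf_comm] at hnot2 hone2 htwo2
  -- conclude
  apply csSup_le'
  rintro k ⟨s, u, Z, hdec, hk⟩
  have hA1ne : A1.Nonempty := Finset.card_pos.1 (by rw [hA1card]; omega)
  have hA2ne : A2.Nonempty := Finset.card_pos.1 (by rw [hA2card]; omega)
  have b1 := aux_main_bound (Q ⊓ Q') u Z hdec hk A1 hA1ne (w1 + zd1) hnot1 hone1 htwo1
  have b2 := aux_main_bound (Q ⊓ Q') u Z hdec hk A2 hA2ne (w2 + zd2) hnot2 hone2 htwo2
  rw [hA1card] at b1
  rw [hA2card] at b2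
  simp only [le_min_iff]
  omega
end

section
/- Let Q and Q' be monomial primary ideals of S = K[x_1,…,x_n] with √Q = (x_1,…,x_t) and √Q' = (x_{r+1},…,x_p), where 1 < r ≤ t < p ≤ n and n ≥ 4. Then sdepth(Q ∩ Q') ≤ min{ (2n + t − p − r + 2)/2, n − ⌊t/2⌋, n − ⌊(p−t)/2⌋ }, where the first bound means 2·sdepth(Q ∩ Q') ≤ 2n + t − p − r + 2. -/
open MvPolynomial

variable {K : Type*} [Field K]

namespace SdepthAux

variable {n : ℕ}

lemma mon_ne_zero (d : Fin n →₀ ℕ) : (monomial d (1:K)) ≠ 0 := by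
  simp [monomial_eq_zero]

lemma support_mon (d : Fin n →₀ ℕ) : (monomial d (1:K)).support = {d} := by
  classical rw [support_monomial, if_neg one_ne_zero]

lemma mon_mul (d e : Fin n →₀ ℕ) :
    (monomial d (1:K)) * monomial e 1 = monomial (d + e) 1 := by
  rw [monomial_mul, one_mul]

lemma finsupp_support_mono {d e : Fin n →₀ ℕ} (h : d ≤ e) : d.support ⊆ e.support := by
  intro i hi
  rw [Finsupp.mem_support_iff] at hi ⊢
  have := Finsupp.le_def.mp h i
  omega

lemma mon_mem_of_mem_span {S : Set (MvPolynomial (Fin n) K)}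
    (hS : ∀ w ∈ S, ∃ d : Fin n →₀ ℕ, w = monomial d 1) {e : Fin n →₀ ℕ}
    (he : monomial e (1:K) ∈ Submodule.span K S) : monomial e (1:K) ∈ S := by
  classical
  let M : Submodule K (MvPolynomial (Fin n) K) :=
  { carrier := {q | ∀ m ∈ q.support, monomial m (1:K) ∈ S}
    add_mem' := fun {a b} ha hb m hm => by
      rcases Finset.mem_union.mp (MvPolynomial.support_add hm) with h | h
      exacts [ha m h, hb m h]
    zero_mem' := by simp
    smul_mem' := fun c q hq m hm => hq m (Finsupp.support_smul hm) }
  have hle : Submodule.span K S ≤ M := by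
    rw [Submodule.span_le]
    intro w hw
    obtain ⟨d, rfl⟩ := hS w hw
    intro m hm
    rw [support_mon, Finset.mem_singleton] at hm
    subst hm; exact hw
  have he' : e ∈ (monomial e (1:K)).support := by
    rw [support_mon]; exact Finset.mem_singleton_self e
  exact hle he e he'

lemma mem_stanleySpace_iff {μ : Fin n →₀ ℕ} {Z : Finset (Fin n)} {e : Fin n →₀ ℕ} :
    monomial e (1:K) ∈ stanleySpace (monomial μ 1) Z ↔
      ∃ d : Fin n →₀ ℕ, ↑d.support ⊆ (Z : Set (Fin n)) ∧ e = μ + d := by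
  constructor
  · intro h
    have h' := mon_mem_of_mem_span ?_ h
    · obtain ⟨d, hd, hw⟩ := h'
      rw [mon_mul] at hw
      exact ⟨d, hd, monomial_left_injective one_ne_zero hw⟩
    · rintro w ⟨d, hd, rfl⟩
      exact ⟨μ + d, by rw [mon_mul]⟩
  · rintro ⟨d, hd, rfl⟩
    exact Submodule.subset_span ⟨d, hd, by rw [mon_mul]⟩

lemma exists_space {s : ℕ} {I : Ideal (MvPolynomial (Fin n) K)}
    {u : Fin s → MvPolynomial (Fin n) K} {Z : Fin s → Finset (Fin n)}
    (hd : IsStanleyDecomp I u Z) {e : Fin n →₀ ℕ} (he : monomial e (1:K) ∈ I) :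
    ∃ i, monomial e (1:K) ∈ stanleySpace (u i) (Z i) := by
  have h1 : monomial e (1:K) ∈ (⨆ i, stanleySpace (u i) (Z i)) := by
    rw [hd.2.2]; exact he
  rw [show (⨆ i, stanleySpace (u i) (Z i)) =
      Submodule.span K (⋃ i, { w | ∃ d : Fin n →₀ ℕ, ↑d.support ⊆ ((Z i) : Set (Fin n)) ∧
        w = u i * MvPolynomial.monomial d 1 }) from (Submodule.span_iUnion _).symm] at h1
  have h2 := mon_mem_of_mem_span ?_ h1
  · obtain ⟨Si, ⟨i, rfl⟩, hmem⟩ := h2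
    exact ⟨i, Submodule.subset_span hmem⟩
  · rintro w hw
    obtain ⟨Si, ⟨i, rfl⟩, d, hd', rfl⟩ := hw
    obtain ⟨μ, hμ⟩ := hd.1 i
    exact ⟨μ + d, by rw [hμ, mon_mul]⟩

lemma space_le {s : ℕ} {I : Ideal (MvPolynomial (Fin n) K)}
    {u : Fin s → MvPolynomial (Fin n) K} {Z : Fin s → Finset (Fin n)}
    (hd : IsStanleyDecomp I u Z) (i : Fin s) {q : MvPolynomial (Fin n) K}
    (hq : q ∈ stanleySpace (u i) (Z i)) : q ∈ I := by
  have := hd.2.2 ▸ (le_iSup (fun i => stanleySpace (u i) (Z i)) i) hq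
  exact (Submodule.restrictScalars_mem _ _ _).mp this

lemma extend_mem {μ : Fin n →₀ ℕ} {Z : Finset (Fin n)} {e b : Fin n →₀ ℕ}
    (he : monomial e (1:K) ∈ stanleySpace (monomial μ 1) Z)
    (hb : ↑b.support ⊆ (Z : Set (Fin n))) :
    monomial (e + b) (1:K) ∈ stanleySpace (monomial μ 1) Z := by
  classical
  rw [mem_stanleySpace_iff] at he ⊢
  obtain ⟨d, hd, rfl⟩ := he
  refine ⟨d + b, ?_, by rw [add_assoc]⟩
  intro x hx
  rcases Finset.mem_union.mp (Finsupp.support_add (by exact_mod_cast hx)) with h | h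
  · exact hd h
  · exact hb h

lemma base_mem {μ : Fin n →₀ ℕ} {Z : Finset (Fin n)} {γ a b : Fin n →₀ ℕ}
    (hab : ∀ x, a x = 0 ∨ b x = 0)
    (ha : monomial (γ + a) (1:K) ∈ stanleySpace (monomial μ 1) Z)
    (hb : monomial (γ + b) (1:K) ∈ stanleySpace (monomial μ 1) Z) :
    monomial γ (1:K) ∈ stanleySpace (monomial μ 1) Z := by
  rw [mem_stanleySpace_iff] at ha hb ⊢
  obtain ⟨d1, hd1, h1⟩ := ha
  obtain ⟨d2, hd2, h2⟩ := hb
  have e1 : ∀ x, γ x + a x = μ x + d1 x := fun x => by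
    rw [← Finsupp.add_apply, ← Finsupp.add_apply, ← h1]
  have e2 : ∀ x, γ x + b x = μ x + d2 x := fun x => by
    rw [← Finsupp.add_apply, ← Finsupp.add_apply, ← h2]
  have hμγ : μ ≤ γ := by
    rw [Finsupp.le_def]; intro x
    rcases hab x with h | h
    · have := e1 x; omega
    · have := e2 x; omega
  refine ⟨γ - μ, ?_, (add_tsub_cancel_of_le hμγ).symm⟩
  have hle : γ - μ ≤ d1 := by
    rw [Finsupp.le_def]; intro x
    rw [Finsupp.tsub_apply]
    have := e1 x; omega
  exact Set.Subset.trans (by exact_mod_cast finsupp_support_mono hle) hd1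

lemma disjoint_spaces {s : ℕ} {I : Ideal (MvPolynomial (Fin n) K)}
    {u : Fin s → MvPolynomial (Fin n) K} {Z : Fin s → Finset (Fin n)}
    (hd : IsStanleyDecomp I u Z) {i j : Fin s} (hij : i ≠ j)
    {q : MvPolynomial (Fin n) K} (hqi : q ∈ stanleySpace (u i) (Z i))
    (hqj : q ∈ stanleySpace (u j) (Z j)) : q = 0 :=
  Submodule.disjoint_def.mp (hd.2.1.pairwiseDisjoint hij) q hqi hqj



lemma single_support_subset {n : ℕ} {j : Fin n} {Z : Finset (Fin n)} (hj : j ∈ Z) :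
    ↑(Finsupp.single j (1:ℕ)).support ⊆ (Z : Set (Fin n)) := by
  intro x hx
  have hx' : x ∈ (Finsupp.single j (1:ℕ)).support := hx
  rw [Finsupp.support_single_ne_zero j one_ne_zero, Finset.mem_singleton] at hx'
  subst hx'; exact hj

lemma single_disj {n : ℕ} {i j : Fin n} (hne : i ≠ j) :
    ∀ x, (Finsupp.single i (1:ℕ)) x = 0 ∨ (Finsupp.single j (1:ℕ)) x = 0 := by
  intro x
  rw [Finsupp.single_apply, Finsupp.single_apply]
  split_ifs with h1 h2
  · exact (hne (h1.trans h2.symm)).elim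
  · right; rfl
  · left; rfl
  · left; rfl

lemma count_one {n : ℕ} {s : ℕ} {I : Ideal (MvPolynomial (Fin n) K)}
    {u : Fin s → MvPolynomial (Fin n) K} {Z : Fin s → Finset (Fin n)}
    (hd : IsStanleyDecomp I u Z) {k : ℕ} (hk : ∀ i, k ≤ (Z i).card)
    {γ : Fin n →₀ ℕ} {V : Finset (Fin n)} (hV : V.Nonempty)
    (hγ : (monomial γ (1:K)) ∉ I)
    (hγi : ∀ i ∈ V, (monomial (γ + Finsupp.single i 1) (1:K)) ∈ I) :
    2 * k + V.card ≤ 2 * n + 1 := by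
  classical
  have hex : ∀ i : {x // x ∈ V}, ∃ j,
      monomial (γ + Finsupp.single i.1 1) (1:K) ∈ stanleySpace (u j) (Z j) :=
    fun i => exists_space hd (hγi i.1 i.2)
  choose σ hσ using hex
  set f : {x // x ∈ V} → Finset (Fin n) :=
    fun i => ((Z (σ i)).erase i.1) ∩ V with hf
  have key : ∀ (i j : {x // x ∈ V}), i.1 ≠ j.1 → j.1 ∈ f i → i.1 ∈ f j → False := by
    intro i j hne hji hij
    have hjZ : (j.1 : Fin n) ∈ Z (σ i) :=
      Finset.mem_of_mem_erase (Finset.mem_inter.mp hji).1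
    have hiZ : (i.1 : Fin n) ∈ Z (σ j) :=
      Finset.mem_of_mem_erase (Finset.mem_inter.mp hij).1
    obtain ⟨μi, hμi⟩ := hd.1 (σ i)
    obtain ⟨μj, hμj⟩ := hd.1 (σ j)
    have hσi : monomial (γ + Finsupp.single i.1 1) (1:K) ∈
        stanleySpace (monomial μi 1) (Z (σ i)) := by
      have := hσ i; rwa [hμi] at this
    have hσj : monomial (γ + Finsupp.single j.1 1) (1:K) ∈
        stanleySpace (monomial μj 1) (Z (σ j)) := by
      have := hσ j; rwa [hμj] at this
    have m1 : monomial (γ + Finsupp.single i.1 1 + Finsupp.single j.1 1) (1:K) ∈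
        stanleySpace (monomial μi 1) (Z (σ i)) :=
      extend_mem hσi (single_support_subset hjZ)
    have m2 : monomial (γ + Finsupp.single i.1 1 + Finsupp.single j.1 1) (1:K) ∈
        stanleySpace (monomial μj 1) (Z (σ j)) := by
      have := extend_mem hσj (single_support_subset hiZ)
      rwa [add_right_comm γ (Finsupp.single j.1 1) (Finsupp.single i.1 1)] at this
    by_cases hss : σ i = σ j
    · have hμij : μj = μi := by
        have : u (σ i) = u (σ j) := by rw [hss]
        rw [hμi, hμj] at this
        exact (monomial_left_injective one_ne_zero this.symm)
      have hσj' : monomial (γ + Finsupp.single j.1 1) (1:K) ∈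
          stanleySpace (monomial μi 1) (Z (σ i)) := by
        rw [← hss, hμij] at hσj; exact hσj
      have hbase := base_mem (single_disj hne) hσi hσj'
      rw [← hμi] at hbase
      exact hγ (space_le hd (σ i) hbase)
    · rw [← hμi] at m1
      rw [← hμj] at m2
      exact mon_ne_zero _ (disjoint_spaces hd hss m1 m2)
  -- sum bound
  have hsum : ∑ i ∈ V.attach, (f i).card ≤ (V.card).choose 2 := by
    rw [← Finset.card_powersetCard, ← Finset.card_sigma]
    apply Finset.card_le_card_of_injOn (fun q => {q.1.1, q.2})
    · rintro ⟨i, j⟩ hq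
      rw [Finset.mem_coe, Finset.mem_sigma] at hq
      obtain ⟨hi, hj⟩ := hq
      have hjV : j ∈ V := (Finset.mem_inter.mp hj).2
      have hne : j ≠ i.1 := Finset.ne_of_mem_erase (Finset.mem_inter.mp hj).1
      rw [Finset.mem_coe, Finset.mem_powersetCard]
      constructor
      · intro x hx
        rcases Finset.mem_insert.mp hx with h | h
        · subst h; exact i.2
        · rw [Finset.mem_singleton] at h; subst h; exact hjV
      · rw [Finset.card_insert_of_notMem (by
          rw [Finset.mem_singleton]; exact fun h => hne h.symm), Finset.card_singleton]
    · rintro ⟨i, j⟩ hq ⟨i', j'⟩ hq' heq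
      simp only [Finset.mem_coe, Finset.mem_sigma] at hq hq'
      have hj : j ∈ f i := hq.2
      have hj' : j' ∈ f i' := hq'.2
      have hne : j ≠ i.1 := Finset.ne_of_mem_erase (Finset.mem_inter.mp hj).1
      have hne' : j' ≠ i'.1 := Finset.ne_of_mem_erase (Finset.mem_inter.mp hj').1
      simp only at heq
      have hii : i.1 ∈ ({i'.1, j'} : Finset (Fin n)) := by
        rw [← heq]; exact Finset.mem_insert_self _ _
      rcases Finset.mem_insert.mp hii with hcase | hcase
      · -- i = i'
        have hi_eq : i = i' := Subtype.ext hcase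
        subst hi_eq
        have hjj : j ∈ ({i.1, j'} : Finset (Fin n)) := by
          rw [← heq]; exact Finset.mem_insert_of_mem (Finset.mem_singleton_self _)
        rcases Finset.mem_insert.mp hjj with h | h
        · exact (hne h).elim
        · rw [Finset.mem_singleton] at h; subst h; rfl
      · -- i.1 = j' and then i'.1 = j : contradiction via key
        rw [Finset.mem_singleton] at hcase
        have hji0 : i'.1 ∈ ({i.1, j} : Finset (Fin n)) := by
          rw [heq]; exact Finset.mem_insert_self _ _
        rcases Finset.mem_insert.mp hji0 with h | h
        · exact ((hne' (by rw [← hcase, h])).elim)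
        · rw [Finset.mem_singleton] at h
          have hne2 : i.1 ≠ i'.1 := by
            intro hcontra
            exact hne (by rw [← h, ← hcontra])
          have hji2 : i'.1 ∈ f i := by rw [h]; exact hj
          have hij2 : i.1 ∈ f i' := by rw [hcase]; exact hj'
          exact (key i i' hne2 hji2 hij2).elim
  -- averaging
  have havg : ∃ i ∈ V.attach, 2 * (f i).card + 1 ≤ V.card := by
    by_contra hcon
    push_neg at hcon
    have h1 : V.card * V.card ≤ ∑ i ∈ V.attach, 2 * (f i).card := by
      calc V.card * V.card = ∑ _i ∈ V.attach, V.card := by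
            rw [Finset.sum_const, Finset.card_attach, smul_eq_mul]
        _ ≤ _ := Finset.sum_le_sum (fun i hi => by have := hcon i hi; omega)
    rw [← Finset.mul_sum] at h1
    have h2 : 2 * ((V.card).choose 2) ≤ V.card * (V.card - 1) := by
      rw [Nat.choose_two_right, mul_comm]
      exact Nat.div_mul_le_self _ 2
    have h3 : V.card * V.card ≤ V.card * (V.card - 1) := by
      calc V.card * V.card ≤ 2 * ∑ i ∈ V.attach, (f i).card := h1
        _ ≤ 2 * ((V.card).choose 2) := by omega
        _ ≤ V.card * (V.card - 1) := h2
    have hV1 : 1 ≤ V.card := Finset.card_pos.mpr hV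
    have := Nat.le_of_mul_le_mul_left h3 (by omega)
    omega
  obtain ⟨i, _, hfi⟩ := havg
  have hZsub : Z (σ i) ⊆ (insert i.1 (f i)) ∪ (Finset.univ \ V) := by
    intro x hx
    by_cases hxV : x ∈ V
    · apply Finset.mem_union_left
      by_cases hxi : x = i.1
      · subst hxi; exact Finset.mem_insert_self _ _
      · exact Finset.mem_insert_of_mem
          (Finset.mem_inter.mpr ⟨Finset.mem_erase.mpr ⟨hxi, hx⟩, hxV⟩)
    · exact Finset.mem_union_right _ (Finset.mem_sdiff.mpr ⟨Finset.mem_univ _, hxV⟩)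
  have hZcard : (Z (σ i)).card ≤ ((f i).card + 1) + (n - V.card) := by
    calc (Z (σ i)).card ≤ ((insert i.1 (f i)) ∪ (Finset.univ \ V)).card :=
          Finset.card_le_card hZsub
      _ ≤ (insert i.1 (f i)).card + (Finset.univ \ V).card := Finset.card_union_le _ _
      _ ≤ ((f i).card + 1) + (n - V.card) := by
          have h4 : (insert i.1 (f i)).card ≤ (f i).card + 1 := Finset.card_insert_le _ _
          have h5 : (Finset.univ \ V).card = n - V.card := by
            rw [Finset.card_sdiff_of_subset (Finset.subset_univ _), Finset.card_univ, Fintype.card_fin]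
          omega
  have hkZ := hk (σ i)
  have hVn : V.card ≤ n := by
    have := Finset.card_le_univ V
    rwa [Fintype.card_fin] at this
  omega


lemma count_half {n : ℕ} {s : ℕ} {I : Ideal (MvPolynomial (Fin n) K)}
    {u : Fin s → MvPolynomial (Fin n) K} {Z : Fin s → Finset (Fin n)}
    (hd : IsStanleyDecomp I u Z)
    {γ : Fin n →₀ ℕ} {V1 V2 : Finset (Fin n)}
    (hγ2 : ∀ j ∈ V2, (monomial (γ + Finsupp.single j 1) (1:K)) ∉ I)
    (σ : {x // x ∈ V1} × {x // x ∈ V2} → Fin s)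
    (hσ : ∀ q, monomial (γ + Finsupp.single q.1.1 1 + Finsupp.single q.2.1 1) (1:K) ∈
        stanleySpace (u (σ q)) (Z (σ q))) :
    ∑ q : {x // x ∈ V1} × {x // x ∈ V2}, ((Z (σ q)).erase q.1.1 ∩ V1).card
      ≤ (V1.card.choose 2) * V2.card := by
  classical
  set g : {x // x ∈ V1} × {x // x ∈ V2} → Finset (Fin n) :=
    fun q => (Z (σ q)).erase q.1.1 ∩ V1 with hg
  have key : ∀ (q q' : {x // x ∈ V1} × {x // x ∈ V2}), q.2 = q'.2 →
      q.1.1 ≠ q'.1.1 → q'.1.1 ∈ g q → q.1.1 ∈ g q' → False := by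
    intro q q' hqq hne hq'q hqq'
    have hi'Z : q'.1.1 ∈ Z (σ q) :=
      Finset.mem_of_mem_erase (Finset.mem_inter.mp hq'q).1
    have hiZ : q.1.1 ∈ Z (σ q') :=
      Finset.mem_of_mem_erase (Finset.mem_inter.mp hqq').1
    obtain ⟨μ1, hμ1⟩ := hd.1 (σ q)
    obtain ⟨μ2, hμ2⟩ := hd.1 (σ q')
    set δ : Fin n →₀ ℕ := γ + Finsupp.single q.2.1 1 with hδ
    have h1 : monomial (δ + Finsupp.single q.1.1 1) (1:K) ∈
        stanleySpace (monomial μ1 1) (Z (σ q)) := by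
      have := hσ q; rw [hμ1] at this
      rwa [add_right_comm γ (Finsupp.single q.1.1 1) (Finsupp.single q.2.1 1)] at this
    have h2 : monomial (δ + Finsupp.single q'.1.1 1) (1:K) ∈
        stanleySpace (monomial μ2 1) (Z (σ q')) := by
      have := hσ q'; rw [hμ2] at this
      rw [add_right_comm γ (Finsupp.single q'.1.1 1) (Finsupp.single q'.2.1 1)] at this
      rwa [← hqq] at this
    have m1 : monomial (δ + Finsupp.single q.1.1 1 + Finsupp.single q'.1.1 1) (1:K) ∈
        stanleySpace (monomial μ1 1) (Z (σ q)) :=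
      extend_mem h1 (single_support_subset hi'Z)
    have m2 : monomial (δ + Finsupp.single q.1.1 1 + Finsupp.single q'.1.1 1) (1:K) ∈
        stanleySpace (monomial μ2 1) (Z (σ q')) := by
      have := extend_mem h2 (single_support_subset hiZ)
      rwa [add_right_comm δ (Finsupp.single q'.1.1 1) (Finsupp.single q.1.1 1)] at this
    by_cases hss : σ q = σ q'
    · have hμ12 : μ2 = μ1 := by
        have h' : u (σ q) = u (σ q') := by rw [hss]
        rw [hμ1, hμ2] at h'
        exact monomial_left_injective one_ne_zero h'.symm
      have h2' : monomial (δ + Finsupp.single q'.1.1 1) (1:K) ∈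
          stanleySpace (monomial μ1 1) (Z (σ q)) := by
        rw [← hss, hμ12] at h2; exact h2
      have hbase := base_mem (single_disj hne) h1 h2'
      rw [← hμ1] at hbase
      exact hγ2 q.2.1 q.2.2 (space_le hd (σ q) hbase)
    · rw [← hμ1] at m1
      rw [← hμ2] at m2
      exact mon_ne_zero _ (disjoint_spaces hd hss m1 m2)
  rw [← Finset.card_sigma]
  have htarget : ((V1.powersetCard 2) ×ˢ V2).card = (V1.card.choose 2) * V2.card := by
    rw [Finset.card_product, Finset.card_powersetCard]
  rw [← htarget]
  apply Finset.card_le_card_of_injOn (fun x => ({x.1.1.1, x.2}, x.1.2.1))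
  · rintro ⟨q, i'⟩ hx
    rw [Finset.mem_coe, Finset.mem_sigma] at hx
    obtain ⟨-, hi'⟩ := hx
    have hi'V : i' ∈ V1 := (Finset.mem_inter.mp hi').2
    have hne : i' ≠ q.1.1 := Finset.ne_of_mem_erase (Finset.mem_inter.mp hi').1
    rw [Finset.mem_coe, Finset.mem_product]
    constructor
    · rw [Finset.mem_powersetCard]
      constructor
      · intro x hx
        rcases Finset.mem_insert.mp hx with h | h
        · subst h; exact q.1.2
        · rw [Finset.mem_singleton] at h; subst h; exact hi'V
      · rw [Finset.card_insert_of_notMem (by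
          rw [Finset.mem_singleton]; exact fun h => hne h.symm), Finset.card_singleton]
    · exact q.2.2
  · rintro ⟨q, i'⟩ hx ⟨q', a'⟩ hy heq
    simp only [Finset.mem_coe, Finset.mem_sigma] at hx hy
    have hi' : i' ∈ g q := hx.2
    have ha' : a' ∈ g q' := hy.2
    have hne : i' ≠ q.1.1 := Finset.ne_of_mem_erase (Finset.mem_inter.mp hi').1
    have hne' : a' ≠ q'.1.1 := Finset.ne_of_mem_erase (Finset.mem_inter.mp ha').1
    simp only [Prod.mk.injEq] at heq
    obtain ⟨hsets, hjj⟩ := heq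
    have hq2 : q.2 = q'.2 := Subtype.ext hjj
    have hii : q.1.1 ∈ ({q'.1.1, a'} : Finset (Fin n)) := by
      rw [← hsets]; exact Finset.mem_insert_self _ _
    rcases Finset.mem_insert.mp hii with hcase | hcase
    · -- q.1 = q'.1
      have hq1 : q.1 = q'.1 := Subtype.ext hcase
      have hqq : q = q' := Prod.ext hq1 hq2
      subst hqq
      have hjj2 : i' ∈ ({q.1.1, a'} : Finset (Fin n)) := by
        rw [← hsets]; exact Finset.mem_insert_of_mem (Finset.mem_singleton_self _)
      rcases Finset.mem_insert.mp hjj2 with h | h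
      · exact (hne h).elim
      · rw [Finset.mem_singleton] at h; subst h; rfl
    · rw [Finset.mem_singleton] at hcase
      have hq'q : q'.1.1 ∈ ({q.1.1, i'} : Finset (Fin n)) := by
        rw [hsets]; exact Finset.mem_insert_self _ _
      rcases Finset.mem_insert.mp hq'q with h | h
      · exact ((hne' (by rw [← hcase, h])).elim)
      · rw [Finset.mem_singleton] at h
        have hne2 : q.1.1 ≠ q'.1.1 := by
          intro hcontra
          exact hne (by rw [← h, ← hcontra])
        have hm1 : q'.1.1 ∈ g q := by rw [h]; exact hi'
        have hm2 : q.1.1 ∈ g q' := by rw [hcase]; exact ha'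
        exact (key q q' hq2 hne2 hm1 hm2).elim

lemma count_two {n : ℕ} {s : ℕ} {I : Ideal (MvPolynomial (Fin n) K)}
    {u : Fin s → MvPolynomial (Fin n) K} {Z : Fin s → Finset (Fin n)}
    (hd : IsStanleyDecomp I u Z) {k : ℕ} (hk : ∀ i, k ≤ (Z i).card)
    {γ : Fin n →₀ ℕ} {V1 V2 : Finset (Fin n)} (h12 : Disjoint V1 V2)
    (hV1 : V1.Nonempty) (hV2 : V2.Nonempty)
    (hγ1 : ∀ i ∈ V1, (monomial (γ + Finsupp.single i 1) (1:K)) ∉ I)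
    (hγ2 : ∀ j ∈ V2, (monomial (γ + Finsupp.single j 1) (1:K)) ∉ I)
    (hγ12 : ∀ i ∈ V1, ∀ j ∈ V2, (monomial (γ + Finsupp.single i 1 + Finsupp.single j 1) (1:K)) ∈ I) :
    2 * k + V1.card + V2.card ≤ 2 * n + 2 := by
  classical
  have hex : ∀ q : {x // x ∈ V1} × {x // x ∈ V2}, ∃ j,
      monomial (γ + Finsupp.single q.1.1 1 + Finsupp.single q.2.1 1) (1:K) ∈
        stanleySpace (u j) (Z j) :=
    fun q => exists_space hd (hγ12 q.1.1 q.1.2 q.2.1 q.2.2)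
  choose σ hσ using hex
  set g1 : {x // x ∈ V1} × {x // x ∈ V2} → Finset (Fin n) :=
    fun q => (Z (σ q)).erase q.1.1 ∩ V1 with hg1
  set g2 : {x // x ∈ V1} × {x // x ∈ V2} → Finset (Fin n) :=
    fun q => (Z (σ q)).erase q.2.1 ∩ V2 with hg2
  have hsum1 : ∑ q : {x // x ∈ V1} × {x // x ∈ V2}, (g1 q).card
      ≤ (V1.card.choose 2) * V2.card := count_half hd hγ2 σ hσ
  have hsum2 : ∑ q : {x // x ∈ V1} × {x // x ∈ V2}, (g2 q).card
      ≤ (V2.card.choose 2) * V1.card := by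
    have h2 := count_half hd (V1 := V2) (V2 := V1) hγ1 (fun q => σ (q.2, q.1))
      (fun q => by
        have := hσ (q.2, q.1)
        rwa [add_right_comm γ (Finsupp.single q.2.1 1) (Finsupp.single q.1.1 1)] at this)
    calc ∑ q : {x // x ∈ V1} × {x // x ∈ V2}, (g2 q).card
        = ∑ q : {x // x ∈ V2} × {x // x ∈ V1},
            ((Z (σ (q.2, q.1))).erase q.1.1 ∩ V2).card := by
          apply Fintype.sum_equiv (Equiv.prodComm _ _)
          intro q
          rfl
      _ ≤ (V2.card.choose 2) * V1.card := h2
  -- averaging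
  have hA1 : 1 ≤ V1.card := Finset.card_pos.mpr hV1
  have hB1 : 1 ≤ V2.card := Finset.card_pos.mpr hV2
  obtain ⟨a, ha⟩ : ∃ a, V1.card = a + 1 := ⟨V1.card - 1, by omega⟩
  obtain ⟨b, hb⟩ : ∃ b, V2.card = b + 1 := ⟨V2.card - 1, by omega⟩
  have havg : ∃ q : {x // x ∈ V1} × {x // x ∈ V2},
      2 * ((g1 q).card + (g2 q).card) + 2 ≤ V1.card + V2.card := by
    by_contra hcon
    push_neg at hcon
    have hcard : Fintype.card ({x // x ∈ V1} × {x // x ∈ V2}) = V1.card * V2.card := by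
      rw [Fintype.card_prod, Fintype.card_coe, Fintype.card_coe]
    have hlow : (V1.card * V2.card) * (V1.card + V2.card) ≤
        2 * (∑ q : {x // x ∈ V1} × {x // x ∈ V2}, (g1 q).card)
        + 2 * (∑ q : {x // x ∈ V1} × {x // x ∈ V2}, (g2 q).card)
        + V1.card * V2.card := by
      have : ∀ q : {x // x ∈ V1} × {x // x ∈ V2},
          V1.card + V2.card ≤ 2 * (g1 q).card + 2 * (g2 q).card + 1 := by
        intro q; have := hcon q; omega
      calc (V1.card * V2.card) * (V1.card + V2.card)
          = ∑ _q : {x // x ∈ V1} × {x // x ∈ V2}, (V1.card + V2.card) := by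
            rw [Finset.sum_const, Finset.card_univ, hcard, smul_eq_mul]
        _ ≤ ∑ q : {x // x ∈ V1} × {x // x ∈ V2},
              (2 * (g1 q).card + 2 * (g2 q).card + 1) :=
            Finset.sum_le_sum (fun q _ => this q)
        _ = 2 * (∑ q : {x // x ∈ V1} × {x // x ∈ V2}, (g1 q).card)
            + 2 * (∑ q : {x // x ∈ V1} × {x // x ∈ V2}, (g2 q).card)
            + V1.card * V2.card := by
            rw [Finset.sum_add_distrib, Finset.sum_add_distrib, ← Finset.mul_sum,
              ← Finset.mul_sum, Finset.sum_const, Finset.card_univ, hcard, smul_eq_mul,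
              mul_one]
    have hch1 : 2 * (V1.card.choose 2) ≤ V1.card * (V1.card - 1) := by
      rw [Nat.choose_two_right, mul_comm]
      exact Nat.div_mul_le_self _ 2
    have hch2 : 2 * (V2.card.choose 2) ≤ V2.card * (V2.card - 1) := by
      rw [Nat.choose_two_right, mul_comm]
      exact Nat.div_mul_le_self _ 2
    have hup : 2 * (∑ q : {x // x ∈ V1} × {x // x ∈ V2}, (g1 q).card)
        + 2 * (∑ q : {x // x ∈ V1} × {x // x ∈ V2}, (g2 q).card)
        + V1.card * V2.card
        ≤ V1.card * (V1.card - 1) * V2.card + V2.card * (V2.card - 1) * V1.card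
          + V1.card * V2.card := by
      have e1 : 2 * (∑ q : {x // x ∈ V1} × {x // x ∈ V2}, (g1 q).card)
          ≤ V1.card * (V1.card - 1) * V2.card := by
        calc 2 * (∑ q : {x // x ∈ V1} × {x // x ∈ V2}, (g1 q).card)
            ≤ 2 * ((V1.card.choose 2) * V2.card) := by omega
          _ = (2 * (V1.card.choose 2)) * V2.card := by ring
          _ ≤ V1.card * (V1.card - 1) * V2.card := Nat.mul_le_mul_right _ hch1
      have e2 : 2 * (∑ q : {x // x ∈ V1} × {x // x ∈ V2}, (g2 q).card)
          ≤ V2.card * (V2.card - 1) * V1.card := by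
        calc 2 * (∑ q : {x // x ∈ V1} × {x // x ∈ V2}, (g2 q).card)
            ≤ 2 * ((V2.card.choose 2) * V1.card) := by omega
          _ = (2 * (V2.card.choose 2)) * V1.card := by ring
          _ ≤ V2.card * (V2.card - 1) * V1.card := Nat.mul_le_mul_right _ hch2
      omega
    have hfinal : (V1.card * V2.card) * (V1.card + V2.card) ≤
        (V1.card * V2.card) * (V1.card + V2.card - 1) := by
      refine le_trans (le_trans hlow hup) (le_of_eq ?_)
      rw [ha, hb]
      have hsub : (a + 1) + (b + 1) - 1 = a + b + 1 := by omega
      rw [hsub]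
      simp only [Nat.add_sub_cancel]
      ring
    have hpos : 0 < V1.card * V2.card := by positivity
    have := Nat.le_of_mul_le_mul_left hfinal hpos
    omega
  obtain ⟨q, hq⟩ := havg
  have hZsub : Z (σ q) ⊆ (insert q.1.1 (g1 q)) ∪ (insert q.2.1 (g2 q))
      ∪ (Finset.univ \ (V1 ∪ V2)) := by
    intro x hx
    by_cases hxV1 : x ∈ V1
    · apply Finset.mem_union_left
      apply Finset.mem_union_left
      by_cases hxi : x = q.1.1
      · subst hxi; exact Finset.mem_insert_self _ _
      · exact Finset.mem_insert_of_mem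
          (Finset.mem_inter.mpr ⟨Finset.mem_erase.mpr ⟨hxi, hx⟩, hxV1⟩)
    · by_cases hxV2 : x ∈ V2
      · apply Finset.mem_union_left
        apply Finset.mem_union_right
        by_cases hxj : x = q.2.1
        · subst hxj; exact Finset.mem_insert_self _ _
        · exact Finset.mem_insert_of_mem
            (Finset.mem_inter.mpr ⟨Finset.mem_erase.mpr ⟨hxj, hx⟩, hxV2⟩)
      · refine Finset.mem_union_right _ (Finset.mem_sdiff.mpr ⟨Finset.mem_univ _, ?_⟩)
        rw [Finset.mem_union]
        tauto
  have hcardU : (V1 ∪ V2).card = V1.card + V2.card := Finset.card_union_of_disjoint h12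
  have hZcard : (Z (σ q)).card ≤ ((g1 q).card + 1) + ((g2 q).card + 1)
      + (n - (V1.card + V2.card)) := by
    calc (Z (σ q)).card
        ≤ ((insert q.1.1 (g1 q)) ∪ (insert q.2.1 (g2 q))
          ∪ (Finset.univ \ (V1 ∪ V2))).card := Finset.card_le_card hZsub
      _ ≤ ((insert q.1.1 (g1 q)) ∪ (insert q.2.1 (g2 q))).card
          + (Finset.univ \ (V1 ∪ V2)).card := Finset.card_union_le _ _
      _ ≤ (insert q.1.1 (g1 q)).card + (insert q.2.1 (g2 q)).card
          + (Finset.univ \ (V1 ∪ V2)).card := by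
          have := Finset.card_union_le (insert q.1.1 (g1 q)) (insert q.2.1 (g2 q))
          omega
      _ ≤ ((g1 q).card + 1) + ((g2 q).card + 1) + (n - (V1.card + V2.card)) := by
          have h4 : (insert q.1.1 (g1 q)).card ≤ (g1 q).card + 1 := Finset.card_insert_le _ _
          have h5 : (insert q.2.1 (g2 q)).card ≤ (g2 q).card + 1 := Finset.card_insert_le _ _
          have h6 : (Finset.univ \ (V1 ∪ V2)).card = n - (V1.card + V2.card) := by
            rw [Finset.card_sdiff_of_subset (Finset.subset_univ _), Finset.card_univ, Fintype.card_fin,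
              hcardU]
          omega
  have hkZ := hk (σ q)
  have hVn : V1.card + V2.card ≤ n := by
    have := Finset.card_le_univ (V1 ∪ V2)
    rw [Fintype.card_fin] at this
    omega
  omega


lemma mon_mem_of_le {n : ℕ} {J : Ideal (MvPolynomial (Fin n) K)} {a b : Fin n →₀ ℕ}
    (hab : a ≤ b) (ha : monomial a (1:K) ∈ J) : monomial b (1:K) ∈ J := by
  have h : monomial b (1:K) = monomial a 1 * monomial (b - a) 1 := by
    rw [mon_mul, add_tsub_cancel_of_le hab]
  rw [h]; exact Ideal.mul_mem_right _ _ ha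

lemma not_mem_radical {n : ℕ} {J : Ideal (MvPolynomial (Fin n) K)} {S : Set (Fin n)}
    (hrad : J.radical = Ideal.span ((fun i => (X i : MvPolynomial (Fin n) K)) '' S))
    {d : Fin n →₀ ℕ} (hd : ∀ i ∈ S, d i = 0) : monomial d (1:K) ∉ J.radical := by
  intro h
  rw [hrad] at h
  have h2 := mem_ideal_span_X_image.mp h
  obtain ⟨i, hiS, hi⟩ := h2 d (by rw [support_mon]; exact Finset.mem_singleton_self d)
  exact hi (hd i hiS)

lemma not_mem_of_radical {n : ℕ} {J : Ideal (MvPolynomial (Fin n) K)} {S : Set (Fin n)}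
    (hrad : J.radical = Ideal.span ((fun i => (X i : MvPolynomial (Fin n) K)) '' S))
    {d : Fin n →₀ ℕ} (hd : ∀ i ∈ S, d i = 0) : monomial d (1:K) ∉ J :=
  fun h => not_mem_radical hrad hd (Ideal.le_radical h)

lemma pow_mem_of_radical {n : ℕ} {J : Ideal (MvPolynomial (Fin n) K)} {S : Set (Fin n)}
    (hrad : J.radical = Ideal.span ((fun i => (X i : MvPolynomial (Fin n) K)) '' S))
    {i : Fin n} (hi : i ∈ S) :
    ∃ m : ℕ, monomial (Finsupp.single i m) (1:K) ∈ J := by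
  have hX : (X i : MvPolynomial (Fin n) K) ∈ J.radical := by
    rw [hrad]; exact Ideal.subset_span ⟨i, hi, rfl⟩
  obtain ⟨m, hm⟩ := Ideal.mem_radical_iff.mp hX
  exact ⟨m, by rwa [X_pow_eq_monomial] at hm⟩

lemma primary_not_mem_mul {n : ℕ} {J : Ideal (MvPolynomial (Fin n) K)} (hJ : J.IsPrimary)
    {a b : Fin n →₀ ℕ} (ha : monomial a (1:K) ∉ J) (hb : monomial b (1:K) ∉ J.radical) :
    monomial (a + b) (1:K) ∉ J := by
  intro h
  have h2 := (Ideal.isPrimary_iff.mp hJ).2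
    (x := monomial a (1:K)) (y := monomial b 1) (by rwa [mon_mul])
  tauto

lemma saturate {n : ℕ} {J : Ideal (MvPolynomial (Fin n) K)} {V : Finset (Fin n)}
    (hbound : ∀ i ∈ V, ∃ m : ℕ, (monomial (Finsupp.single i m) (1:K)) ∈ J)
    {γ0 : Fin n →₀ ℕ} (hγ0 : monomial γ0 (1:K) ∉ J) :
    ∃ d : Fin n →₀ ℕ, ↑d.support ⊆ (V : Set (Fin n)) ∧ monomial (γ0 + d) (1:K) ∉ J ∧
      ∀ i ∈ V, monomial (γ0 + d + Finsupp.single i 1) (1:K) ∈ J := by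
  classical
  choose M hM using hbound
  set S : Set ℕ := {c : ℕ | ∃ d : Fin n →₀ ℕ, ↑d.support ⊆ (V : Set (Fin n)) ∧
    (∑ i ∈ V, d i) = c ∧ monomial (γ0 + d) (1:K) ∉ J} with hS
  have h0 : (0:ℕ) ∈ S := ⟨0, by simp, by simp, by simpa using hγ0⟩
  have hBdd : BddAbove S := by
    refine ⟨∑ i ∈ V.attach, M i.1 i.2, ?_⟩
    rintro c ⟨d, hdsupp, hdsum, hdmem⟩
    have hdM : ∀ i : {x // x ∈ V}, d i.1 ≤ M i.1 i.2 := by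
      intro i
      by_contra hcon
      push_neg at hcon
      apply hdmem
      apply mon_mem_of_le (a := Finsupp.single i.1 (M i.1 i.2)) _ (hM i.1 i.2)
      rw [Finsupp.single_le_iff, Finsupp.add_apply]
      omega
    calc c = ∑ i ∈ V, d i := hdsum.symm
      _ = ∑ i ∈ V.attach, d i.1 := (Finset.sum_attach V (fun i => d i)).symm
      _ ≤ ∑ i ∈ V.attach, M i.1 i.2 := Finset.sum_le_sum (fun i _ => hdM i)
  have hmem := Nat.sSup_mem ⟨0, h0⟩ hBdd
  obtain ⟨d, hdsupp, hdsum, hdmem⟩ := hmem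
  refine ⟨d, hdsupp, hdmem, ?_⟩
  intro i hi
  by_contra hcon
  have hnew : (sSup S) + 1 ∈ S := by
    refine ⟨d + Finsupp.single i 1, ?_, ?_, ?_⟩
    · intro x hx
      rcases Finset.mem_union.mp (Finsupp.support_add (by exact_mod_cast hx)) with h | h
      · exact hdsupp h
      · exact single_support_subset hi h
    · simp only [Finsupp.add_apply]
      rw [Finset.sum_add_distrib, hdsum]
      congr 1
      simp [Finsupp.single_apply, Finset.sum_ite_eq, hi]
    · rw [← add_assoc]; exact hcon
  have := le_csSup hBdd hnew
  omega

lemma card_filter_Ico {n : ℕ} (a b : ℕ) (hbn : b ≤ n) :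
    (Finset.univ.filter (fun i : Fin n => a ≤ (i:ℕ) ∧ (i:ℕ) < b)).card = b - a := by
  classical
  rw [← Nat.card_Ico a b]
  apply Finset.card_bij (fun (i : Fin n) _ => (i : ℕ))
  · intro i hi
    rw [Finset.mem_filter] at hi
    rw [Finset.mem_Ico]
    exact hi.2
  · intro i hi j hj hij
    exact Fin.val_injective hij
  · intro c hc
    rw [Finset.mem_Ico] at hc
    exact ⟨⟨c, lt_of_lt_of_le hc.2 hbn⟩, by
      rw [Finset.mem_filter]; exact ⟨Finset.mem_univ _, hc⟩, rfl⟩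

end SdepthAux

/-- If `Q, Q'` are monomial primary ideals with `√Q = (x_1,…,x_t)` and
`√Q' = (x_{r+1},…,x_p)`, `1 < r ≤ t < p ≤ n`, `n ≥ 4`, then
`sdepth(Q ∩ Q') ≤ min{(2n + t − p − r + 2)/2, n − ⌊t/2⌋, n − ⌊(p−t)/2⌋}`, where the first
bound means `2·sdepth(Q ∩ Q') ≤ 2n + t − p − r + 2`. -/


theorem sdepth_inter_le_general {n t r p : ℕ} (hr : 1 < r) (hrt : r ≤ t) (htp : t < p)
    (hpn : p ≤ n) (hn : 4 ≤ n)
    (Q Q' : Ideal (MvPolynomial (Fin n) K))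
    (hQm : IsMonomialIdeal Q) (hQ'm : IsMonomialIdeal Q')
    (hQp : Q.IsPrimary) (hQ'p : Q'.IsPrimary)
    (hQr : Q.radical =
      Ideal.span ((fun i => (X i : MvPolynomial (Fin n) K)) '' {i | (i : ℕ) < t}))
    (hQ'r : Q'.radical =
      Ideal.span ((fun i => (X i : MvPolynomial (Fin n) K)) ''
        {i | r ≤ (i : ℕ) ∧ (i : ℕ) < p})) :
    2 * sdepth (Q ⊓ Q') ≤ 2 * n + t - p - r + 2 ∧
    sdepth (Q ⊓ Q') ≤ n - t / 2 ∧
    sdepth (Q ⊓ Q') ≤ n - (p - t) / 2 := by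
  classical
  open SdepthAux in
  have hbound : ∀ k : ℕ, (∃ (s : ℕ) (u : Fin s → MvPolynomial (Fin n) K)
      (Z : Fin s → Finset (Fin n)), IsStanleyDecomp (Q ⊓ Q') u Z ∧ ∀ i, k ≤ (Z i).card) →
      2*k + r + (p - t) ≤ 2*n + 2 ∧ 2*k + t ≤ 2*n + 1 ∧ 2*k + (p - t) ≤ 2*n + 1 := by
    rintro k ⟨s, u, Z, hd, hk⟩
    -- variable blocks
    set V1 : Finset (Fin n) := Finset.univ.filter (fun i : Fin n => 0 ≤ (i:ℕ) ∧ (i:ℕ) < r)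
      with hV1def
    set V : Finset (Fin n) := Finset.univ.filter (fun i : Fin n => 0 ≤ (i:ℕ) ∧ (i:ℕ) < t)
      with hVdef
    set V2 : Finset (Fin n) := Finset.univ.filter (fun i : Fin n => t ≤ (i:ℕ) ∧ (i:ℕ) < p)
      with hV2def
    have hV1card : V1.card = r := by
      rw [hV1def, card_filter_Ico 0 r (by omega)]; omega
    have hVcard : V.card = t := by
      rw [hVdef, card_filter_Ico 0 t (by omega)]; omega
    have hV2card : V2.card = p - t := by
      rw [hV2def, card_filter_Ico t p (by omega)]
    have hV1mem : ∀ i : Fin n, i ∈ V1 ↔ (i:ℕ) < r := by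
      intro i; rw [hV1def, Finset.mem_filter]
      constructor
      · exact fun h => h.2.2
      · exact fun h => ⟨Finset.mem_univ _, Nat.zero_le _, h⟩
    have hVmem : ∀ i : Fin n, i ∈ V ↔ (i:ℕ) < t := by
      intro i; rw [hVdef, Finset.mem_filter]
      constructor
      · exact fun h => h.2.2
      · exact fun h => ⟨Finset.mem_univ _, Nat.zero_le _, h⟩
    have hV2mem : ∀ i : Fin n, i ∈ V2 ↔ t ≤ (i:ℕ) ∧ (i:ℕ) < p := by
      intro i; rw [hV2def, Finset.mem_filter]
      exact ⟨fun h => h.2, fun h => ⟨Finset.mem_univ _, h⟩⟩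
    -- distinguished variables
    have htn : t < n := lt_of_lt_of_le htp hpn
    set xt : Fin n := ⟨t, htn⟩ with hxt
    set x0 : Fin n := ⟨0, by omega⟩ with hx0
    -- powers in the ideals
    have hpowQ : ∀ i ∈ V, ∃ m : ℕ, monomial (Finsupp.single i m) (1:K) ∈ Q := by
      intro i hi
      exact pow_mem_of_radical hQr ((hVmem i).mp hi)
    have hpowQ1 : ∀ i ∈ V1, ∃ m : ℕ, monomial (Finsupp.single i m) (1:K) ∈ Q := by
      intro i hi
      exact pow_mem_of_radical hQr (show (i:ℕ) < t by
        have := (hV1mem i).mp hi; omega)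
    have hpowQ'2 : ∀ i ∈ V2, ∃ m : ℕ, monomial (Finsupp.single i m) (1:K) ∈ Q' := by
      intro i hi
      have h := (hV2mem i).mp hi
      exact pow_mem_of_radical hQ'r (show r ≤ (i:ℕ) ∧ (i:ℕ) < p by omega)
    -- nonemptiness
    have hVne : V.Nonempty := Finset.card_pos.mp (by rw [hVcard]; omega)
    have hV1ne : V1.Nonempty := Finset.card_pos.mp (by rw [hV1card]; omega)
    have hV2ne : V2.Nonempty := Finset.card_pos.mp (by rw [hV2card]; omega)
    -- Bound 2 : uses V and a monomial in Q' \ Q saturated for Q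
    have hbnd2 : 2*k + t ≤ 2*n + 1 := by
      obtain ⟨M2, hM2⟩ := pow_mem_of_radical hQ'r
        (show r ≤ (xt:ℕ) ∧ (xt:ℕ) < p from ⟨hrt, htp⟩)
      have hM2' : monomial (Finsupp.single xt (M2+1)) (1:K) ∈ Q' := by
        apply mon_mem_of_le _ hM2
        rw [Finsupp.single_le_iff, Finsupp.single_eq_same]
        omega
      have hγ0Q : monomial (Finsupp.single xt (M2+1)) (1:K) ∉ Q := by
        apply not_mem_of_radical hQr
        intro i hiS
        rw [Finsupp.single_apply, if_neg]
        intro h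
        rw [← h] at hiS
        exact absurd hiS (lt_irrefl t)
      obtain ⟨d, hdsupp, hcQ, hci⟩ := saturate hpowQ hγ0Q
      have hcI : monomial (Finsupp.single xt (M2+1) + d) (1:K) ∉ Q ⊓ Q' := by
        intro h
        exact hcQ (Submodule.mem_inf.mp h).1
      have hciI : ∀ i ∈ V,
          monomial (Finsupp.single xt (M2+1) + d + Finsupp.single i 1) (1:K) ∈ Q ⊓ Q' := by
        intro i hi
        refine Submodule.mem_inf.mpr ⟨hci i hi, ?_⟩
        apply mon_mem_of_le _ hM2'
        rw [add_assoc]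
        exact self_le_add_right _ _
      have := count_one hd hk hVne hcI hciI
      omega
    -- Bound 3 : uses V2 and a monomial in Q \ Q' saturated for Q'
    have hbnd3 : 2*k + (p - t) ≤ 2*n + 1 := by
      obtain ⟨M3, hM3⟩ := pow_mem_of_radical hQr
        (show (x0:ℕ) < t by simp [hx0]; omega)
      have hM3' : monomial (Finsupp.single x0 (M3+1)) (1:K) ∈ Q := by
        apply mon_mem_of_le _ hM3
        rw [Finsupp.single_le_iff, Finsupp.single_eq_same]
        omega
      have hγ0Q' : monomial (Finsupp.single x0 (M3+1)) (1:K) ∉ Q' := by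
        apply not_mem_of_radical hQ'r
        intro i hiS
        rw [Finsupp.single_apply, if_neg]
        intro h
        rw [← h] at hiS
        have : r ≤ (x0:ℕ) := hiS.1
        rw [hx0] at this
        simp at this
        omega
      obtain ⟨d, hdsupp, hcQ', hci⟩ := saturate hpowQ'2 hγ0Q'
      have hcI : monomial (Finsupp.single x0 (M3+1) + d) (1:K) ∉ Q ⊓ Q' := by
        intro h
        exact hcQ' (Submodule.mem_inf.mp h).2
      have hciI : ∀ i ∈ V2,
          monomial (Finsupp.single x0 (M3+1) + d + Finsupp.single i 1) (1:K) ∈ Q ⊓ Q' := by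
        intro i hi
        refine Submodule.mem_inf.mpr ⟨?_, hci i hi⟩
        apply mon_mem_of_le _ hM3'
        rw [add_assoc]
        exact self_le_add_right _ _
      have := count_one hd hk hV2ne hcI hciI
      rw [hV2card] at this
      omega
    -- Bound 1 : uses V1 and V2, double saturation
    have hbnd1 : 2*k + r + (p - t) ≤ 2*n + 2 := by
      have hone : monomial (0 : Fin n →₀ ℕ) (1:K) = 1 := by
        rw [monomial_zero']; exact C_1
      have hγ00 : monomial (0 : Fin n →₀ ℕ) (1:K) ∉ Q := by
        rw [hone]
        intro h
        exact (Ideal.isPrimary_iff.mp hQp).1 (Ideal.eq_top_iff_one Q |>.mpr h)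
      obtain ⟨d1, hd1supp, h1Q, h1i⟩ := saturate hpowQ1 hγ00
      simp only [zero_add] at h1Q h1i
      have h1Q' : monomial d1 (1:K) ∉ Q' := by
        apply not_mem_of_radical hQ'r
        intro i hiS
        by_contra h
        have hmem : i ∈ d1.support := Finsupp.mem_support_iff.mpr h
        have := hd1supp hmem
        rw [Finset.mem_coe, hV1mem] at this
        have := hiS.1
        omega
      obtain ⟨d2, hd2supp, h2Q', h2j⟩ := saturate hpowQ'2 h1Q'
      have hd2rad : monomial d2 (1:K) ∉ Q.radical := by
        apply not_mem_radical hQr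
        intro i hiS
        by_contra h
        have hmem : i ∈ d2.support := Finsupp.mem_support_iff.mpr h
        have h2 := hd2supp hmem
        rw [Finset.mem_coe, hV2mem] at h2
        have hiS' : (i:ℕ) < t := hiS
        omega
      have hcQ : monomial (d1 + d2) (1:K) ∉ Q := primary_not_mem_mul hQp h1Q hd2rad
      have hnot1 : ∀ i ∈ V1,
          monomial (d1 + d2 + Finsupp.single i 1) (1:K) ∉ Q ⊓ Q' := by
        intro i hi h
        have hiV1 := (hV1mem i).mp hi
        have hsingrad : monomial (Finsupp.single i (1:ℕ)) (1:K) ∉ Q'.radical := by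
          apply not_mem_radical hQ'r
          intro j hjS
          rw [Finsupp.single_apply, if_neg]
          intro hij
          rw [← hij] at hjS
          have := hjS.1
          omega
        exact primary_not_mem_mul hQ'p h2Q' hsingrad (Submodule.mem_inf.mp h).2
      have hnot2 : ∀ j ∈ V2,
          monomial (d1 + d2 + Finsupp.single j 1) (1:K) ∉ Q ⊓ Q' := by
        intro j hj h
        have hjV2 := (hV2mem j).mp hj
        have hsingrad : monomial (Finsupp.single j (1:ℕ)) (1:K) ∉ Q.radical := by
          apply not_mem_radical hQr
          intro i hiS
          rw [Finsupp.single_apply, if_neg]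
          intro hij
          rw [← hij] at hiS
          have hiS' : (j:ℕ) < t := hiS
          omega
        exact primary_not_mem_mul hQp hcQ hsingrad (Submodule.mem_inf.mp h).1
      have hmem12 : ∀ i ∈ V1, ∀ j ∈ V2,
          monomial (d1 + d2 + Finsupp.single i 1 + Finsupp.single j 1) (1:K) ∈ Q ⊓ Q' := by
        intro i hi j hj
        refine Submodule.mem_inf.mpr ⟨?_, ?_⟩
        · -- in Q : from d1 + e_i ∈ Q
          apply mon_mem_of_le _ (h1i i hi)
          rw [Finsupp.le_def]
          intro x
          simp only [Finsupp.add_apply]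
          omega
        · -- in Q' : from d1 + d2 + e_j ∈ Q'
          apply mon_mem_of_le _ (h2j j hj)
          rw [Finsupp.le_def]
          intro x
          simp only [Finsupp.add_apply]
          omega
      have hdisj : Disjoint V1 V2 := by
        rw [Finset.disjoint_left]
        intro i hi1 hi2
        have := (hV1mem i).mp hi1
        have := (hV2mem i).mp hi2
        omega
      have := count_two hd hk hdisj hV1ne hV2ne hnot1 hnot2 hmem12
      rw [hV1card, hV2card] at this
      omega
    exact ⟨hbnd1, hbnd2, hbnd3⟩
  have h1 : sdepth (Q ⊓ Q') ≤ (2*n + t - p - r + 2)/2 := by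
    unfold sdepth
    apply csSup_le'
    intro k hkmem
    have := (hbound k hkmem).1
    omega
  have h2 : sdepth (Q ⊓ Q') ≤ n - t / 2 := by
    unfold sdepth
    apply csSup_le'
    intro k hkmem
    have := (hbound k hkmem).2.1
    omega
  have h3 : sdepth (Q ⊓ Q') ≤ n - (p - t) / 2 := by
    unfold sdepth
    apply csSup_le'
    intro k hkmem
    have := (hbound k hkmem).2.2
    omega
  refine ⟨?_, h2, h3⟩
  omega
end
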